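/- arXiv:2207.08459 — 3 statements merged into one kernel-verified Lean document; each statement's English description precedes it below -/
import Mathlib

section
/- Let ((L,≤_L),(P_n)_{n∈ℕ}) be a well-structured grain line and let ((M,≤_M),(Q_n)_{n∈ℕ}) be a grain line in the graph ⋃P defined by ((L,≤_L),(P_n)). Then M ⊆ L, M is an interval of (L,≤_L), and ≤_M coincides with the restriction of ≤_L to M or with the reverse of that restriction. -/
open SimpleGraph

/-- Two walks (with arbitrary endpoints) are edge-disjoint. -/
def EdgeDisjW {V : Type*} {G : SimpleGraph V} {a b c d : V}
    (p : G.Walk a b) (q : G.Walk c d) : Prop :=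
  ∀ e, e ∈ p.edges → e ∉ q.edges

/-- A graph is infinitely edge-connected: it has at least two vertices and
between any two distinct vertices there are infinitely many pairwise
edge-disjoint paths. -/
def InfEdgeConn {V : Type*} (G : SimpleGraph V) : Prop :=
  (∃ u v : V, u ≠ v) ∧
    ∀ u v : V, u ≠ v →
      ∃ P : ℕ → G.Walk u v,
        (∀ n, (P n).IsPath) ∧ ∀ m n, m ≠ n → EdgeDisjW (P m) (P n)

/-- Infinite edge-connectivity of the subgraph spanned by a vertex set `S`
(used for graphs of the form "union of a family of paths", whose abstract
vertex set is `S`). -/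
def InfEdgeConnOn {V : Type*} (G : SimpleGraph V) (S : Set V) : Prop :=
  (∃ u ∈ S, ∃ v ∈ S, u ≠ v) ∧
    ∀ u ∈ S, ∀ v ∈ S, u ≠ v →
      ∃ P : ℕ → G.Walk u v,
        (∀ n, (P n).IsPath) ∧ ∀ m n, m ≠ n → EdgeDisjW (P m) (P n)

/-- `α` together with the family of paths `P` (one for each edge of `H`)
is a strong immersion of `H` in `G`. -/
def IsStrongImmersion {VH VG : Type*} (H : SimpleGraph VH) (G : SimpleGraph VG)
    (α : VH → VG) (P : ∀ ⦃u v : VH⦄, H.Adj u v → G.Walk (α u) (α v)) : Prop :=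
  Function.Injective α ∧
  (∀ ⦃u v : VH⦄ (h : H.Adj u v), (P h).IsPath) ∧
  (∀ ⦃u v u' v' : VH⦄ (h : H.Adj u v) (h' : H.Adj u' v'),
      s(u, v) ≠ s(u', v') → EdgeDisjW (P h) (P h')) ∧
  (∀ ⦃u v : VH⦄ (h : H.Adj u v), ∀ w ∈ (P h).support,
      (∃ z, α z = w) → w = α u ∨ w = α v)

/-- `H` is strongly immersed in `G`. -/
def StronglyImmersed {VH VG : Type*} (H : SimpleGraph VH) (G : SimpleGraph VG) : Prop :=
  ∃ α P, IsStrongImmersion H G α P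

/-- `β` together with the family of paths `P` witnesses that `G` contains
a subdivision of `H`: the paths are internally disjoint and have no internal
vertex among the branch vertices. -/
def IsSubdivision {VH VG : Type*} (H : SimpleGraph VH) (G : SimpleGraph VG)
    (β : VH → VG) (P : ∀ ⦃u v : VH⦄, H.Adj u v → G.Walk (β u) (β v)) : Prop :=
  Function.Injective β ∧
  (∀ ⦃u v : VH⦄ (h : H.Adj u v), (P h).IsPath) ∧
  (∀ ⦃u v u' v' : VH⦄ (h : H.Adj u v) (h' : H.Adj u' v'),
      s(u, v) ≠ s(u', v') → ∀ w, w ∈ (P h).support → w ∈ (P h').support →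
        (w = β u ∨ w = β v) ∧ (w = β u' ∨ w = β v')) ∧
  (∀ ⦃u v : VH⦄ (h : H.Adj u v), ∀ w ∈ (P h).support,
      (∃ z, β z = w) → w = β u ∨ w = β v)

/-- `H` is a topological minor of `G`. -/
def TopMinor {VH VG : Type*} (H : SimpleGraph VH) (G : SimpleGraph VG) : Prop :=
  ∃ β P, IsSubdivision H G β P

/-- The dyadic rationals of the unit interval: the vertices of the halved
Farey graph. -/
def DyadicSet : Set ℚ := {q | ∃ n k : ℕ, k ≤ 2 ^ n ∧ q = (k : ℚ) / 2 ^ n}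

/-- The halved Farey graph: two dyadic rationals of `[0,1]` are adjacent iff
they are of the form `k/2^n` and `(k+1)/2^n`. -/
def halvedFarey : SimpleGraph DyadicSet where
  Adj a b := a ≠ b ∧ ∃ n k : ℕ, k + 1 ≤ 2 ^ n ∧
    ((a.1 = (k : ℚ) / 2 ^ n ∧ b.1 = ((k : ℚ) + 1) / 2 ^ n) ∨
     (b.1 = (k : ℚ) / 2 ^ n ∧ a.1 = ((k : ℚ) + 1) / 2 ^ n))
  symm := by
    constructor
    rintro a b ⟨hne, n, k, hk, h⟩
    exact ⟨hne.symm, n, k, hk, h.symm⟩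
  loopless := by constructor; rintro a ⟨hne, -⟩; exact hne rfl

/-- Adjacency in the Farey graph on `ℚ ∪ {∞}` (`none` is `∞ = ±1/0`). -/
def fareyAdj : Option ℚ → Option ℚ → Prop
  | some q, some r =>
      q.num * (r.den : ℤ) - r.num * (q.den : ℤ) = 1 ∨
      q.num * (r.den : ℤ) - r.num * (q.den : ℤ) = -1
  | some q, none => q.den = 1
  | none, some r => r.den = 1
  | none, none => False

/-- The Farey graph. -/
def fareyGraph : SimpleGraph (Option ℚ) where
  Adj := fareyAdj
  symm := by
    constructor
    rintro (_ | q) (_ | r) h <;> simp only [fareyAdj] at * <;> omega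
  loopless := by
    constructor
    rintro (_ | q) h <;> simp only [fareyAdj] at h <;> omega
/-- `u` occurs strictly before `v` on the list `l`. -/
def Before {V : Type*} (l : List V) (u v : V) : Prop := List.Sublist [u, v] l

/-- `l` is the (consecutive) portion of the list `R` starting at `u` and
ending at `v`. -/
def IsPortion {V : Type*} (R : List V) (u v : V) (l : List V) : Prop :=
  (∃ pre post, R = pre ++ l ++ post) ∧ l.head? = some u ∧ l.getLast? = some v

/-- The union of a family of walks, as a graph on the ambient vertex set
(its abstract vertex set is `walkSupp P`). -/
def walkUnion {V : Type*} {G : SimpleGraph V} {x y : V}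
    (P : ℕ → G.Walk x y) : SimpleGraph V where
  Adj u v := ∃ n, s(u, v) ∈ (P n).edges
  symm := by
    constructor
    rintro u v ⟨n, h⟩
    exact ⟨n, by rwa [Sym2.eq_swap]⟩
  loopless := by
    constructor
    rintro v ⟨n, h⟩
    exact G.irrefl ((P n).edges_subset_edgeSet h)

/-- The vertices appearing on some walk of the family. -/
def walkSupp {V : Type*} {G : SimpleGraph V} {x y : V}
    (P : ℕ → G.Walk x y) : Set V := {v | ∃ n, v ∈ (P n).support}

/-- An `x`–`y` grain line in `G`. -/
structure GrainLine {V : Type*} (G : SimpleGraph V) (x y : V) where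
  ne_xy : x ≠ y
  /-- The limit set `L`. -/
  L : Set V
  /-- The linear order `≤_L` on `L`. -/
  le : V → V → Prop
  /-- The pairwise edge-disjoint `x`–`y` paths. -/
  P : ℕ → G.Walk x y
  isPath : ∀ n, (P n).IsPath
  edgeDisj : ∀ m n, m ≠ n → EdgeDisjW (P m) (P n)
  le_refl : ∀ v ∈ L, le v v
  le_trans : ∀ u ∈ L, ∀ v ∈ L, ∀ w ∈ L, le u v → le v w → le u w
  le_antisymm : ∀ u ∈ L, ∀ v ∈ L, le u v → le v u → u = v
  le_total : ∀ u ∈ L, ∀ v ∈ L, le u v ∨ le v u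
  x_mem : x ∈ L
  y_mem : y ∈ L
  x_min : ∀ v ∈ L, le x v
  y_max : ∀ v ∈ L, le v y
  /-- (GL1): `L` is the set of vertices lying on a final segment of the paths. -/
  gl1 : ∀ v : V, v ∈ L ↔ ∃ N : ℕ, ∀ n : ℕ, v ∈ (P n).support ↔ N ≤ n
  /-- (GL2): a vertex of some path not in `L` lies on no other path. -/
  gl2 : ∀ n : ℕ, ∀ v ∈ (P n).support, v ∉ L → ∀ m : ℕ, m ≠ n → v ∉ (P m).support
  /-- (GL3): for `n ≥ 1`, the path `P n` traverses the vertices of `L_{<n}`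
  in the order given by `≤_L`. -/
  gl3 : ∀ n : ℕ, 1 ≤ n → ∀ u v : V, u ∈ L → v ∈ L →
      (∃ m < n, u ∈ (P m).support) → (∃ m < n, v ∈ (P m).support) →
      u ≠ v → (le u v ↔ Before (P n).support u v)

namespace GrainLine

variable {V : Type*} {G : SimpleGraph V} {x y : V}

/-- The graph `⋃𝒫` defined by the grain line. -/
def union (gl : GrainLine G x y) : SimpleGraph V := walkUnion gl.P

/-- The vertex set of `⋃𝒫`. -/
def supp (gl : GrainLine G x y) : Set V := walkSupp gl.P

/-- The set `L_{<n}` of vertices of `L` of depth `< n`. -/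
def Llt (gl : GrainLine G x y) (n : ℕ) : Set V :=
  {v | v ∈ gl.L ∧ ∃ m < n, v ∈ (gl.P m).support}

/-- The `𝒫`-depth of a vertex. -/
noncomputable def vDepth (gl : GrainLine G x y) (v : V) : ℕ :=
  sInf {n | v ∈ (gl.P n).support}

/-- The `𝒫`-depth of an edge. -/
noncomputable def eDepth (gl : GrainLine G x y) (e : Sym2 V) : ℕ :=
  sInf {n | e ∈ (gl.P n).edges}

/-- `u` and `v` are the ends of a `𝒫`-segment of depth `d`: both lie in
`L_{<d}` and `v` is the successor of `u` in `(L_{<d}, ≤_L)`. -/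
def IsSegEnds (gl : GrainLine G x y) (d : ℕ) (u v : V) : Prop :=
  u ∈ gl.Llt d ∧ v ∈ gl.Llt d ∧ u ≠ v ∧ gl.le u v ∧
    ∀ z ∈ gl.Llt d, gl.le u z → gl.le z v → z = u ∨ z = v

/-- The grain line is well-structured: every vertex of a `𝒫`-segment
`u P_d v` lying in `L` belongs to the interval `[u,v]` of `(L, ≤_L)`. -/
def WellStructured (gl : GrainLine G x y) : Prop :=
  ∀ d u v, gl.IsSegEnds d u v →
    ∀ w ∈ gl.L, (w = u ∨ w = v ∨ List.Sublist [u, w, v] (gl.P d).support) →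
      gl.le u w ∧ gl.le w v

/-- The grain line is free: the graph `⋃𝒫` it defines is infinitely
edge-connected. -/
def Free (gl : GrainLine G x y) : Prop := InfEdgeConnOn gl.union gl.supp

/-- The grain line is wildly presented. -/
def WildlyPresented (gl : GrainLine G x y) : Prop :=
  ∀ n : ℕ, 1 ≤ n → ∀ u v : V, u ∈ gl.Llt n → v ∈ gl.Llt n → u ≠ v → gl.le u v →
    ∃ w ∈ gl.L, w ≠ u ∧ w ≠ v ∧ gl.le u w ∧ gl.le w v ∧
      List.Sublist [u, w, v] (gl.P n).support

end GrainLine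

/-- `G` is a generalised halved Farey graph: it is defined by a grain line
satisfying (GL2') and (GL3'). -/
def IsGenHalvedFarey {V : Type*} (G : SimpleGraph V) : Prop :=
  ∃ (x y : V) (gl : GrainLine G x y),
    (∀ v : V, v ∈ gl.L) ∧
    (∀ u v : V, gl.le u v ↔ (u = v ∨ ∃ n, Before (gl.P n).support u v)) ∧
    (∀ u v : V, G.Adj u v ↔ ∃ n, s(u, v) ∈ (gl.P n).edges)
/-- `{A, B}` is a compound-separation of `G`. -/
def IsCompoundSep {V : Type*} (G : SimpleGraph V) (A B : Set V) : Prop :=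
  A ∪ B = Set.univ ∧ (A \ B).Nonempty ∧ (B \ A).Nonempty ∧ (A ∩ B).Finite ∧
    {p : V × V | G.Adj p.1 p.2 ∧ p.1 ∈ A \ B ∧ p.2 ∈ B \ A}.Finite

/-- The separation `{A, B}` separates the vertices `u` and `v`. -/
def SepPair {V : Type*} (A B : Set V) (u v : V) : Prop :=
  (u ∈ A \ B ∧ v ∈ B \ A) ∨ (u ∈ B \ A ∧ v ∈ A \ B)

/-- The compound-separation `{A, B}` separates `u` and `v` minimally. -/
def MinSeps {V : Type*} (G : SimpleGraph V) (A B : Set V) (u v : V) : Prop :=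
  SepPair A B u v ∧
    ∀ C D : Set V, IsCompoundSep G C D → C ∩ D ⊂ A ∩ B → ¬ SepPair C D u v

/-- `{A, B}` is a unitary compound-separation of `G` with separator `w`. -/
def IsUnitaryCSep {V : Type*} (G : SimpleGraph V) (A B : Set V) (w : V) : Prop :=
  IsCompoundSep G A B ∧ A ∩ B = {w}

/-- `w` is a compound-cutvertex of `G`. -/
def IsCompoundCutvertex {V : Type*} (G : SimpleGraph V) (w : V) : Prop :=
  ∃ A B, IsUnitaryCSep G A B w

/-- `G` is `k`-compound-connected: no compound-separation of order `< k`
separates any two vertices. -/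
def kCompConn {V : Type*} (G : SimpleGraph V) (k : ℕ) : Prop :=
  ∀ A B : Set V, IsCompoundSep G A B → (A ∩ B).ncard < k →
    ∀ u v : V, ¬ SepPair A B u v

/-- `u` and `v` cannot be separated by deleting finitely many edges. -/
def FinEdgeConn {V : Type*} (G : SimpleGraph V) (u v : V) : Prop :=
  ∀ F : Set (Sym2 V), F.Finite → (G.deleteEdges F).Reachable u v

/-- `G` is a Π-graph: it is infinitely edge-connected but has no two vertices
linked by infinitely many pairwise internally disjoint paths. -/
def PiGraph {V : Type*} (G : SimpleGraph V) : Prop :=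
  InfEdgeConn G ∧
    ∀ u v : V, u ≠ v →
      ¬ ∃ P : ℕ → G.Walk u v, (∀ n, (P n).IsPath) ∧
          ∀ m n, m ≠ n → ∀ w ∈ (P m).support, w ∈ (P n).support → w = u ∨ w = v

/-- `H` is a `k`-bounded minor of `G`: there are disjoint nonempty connected
branch sets of size `< k`. -/
def IsBddMinor {VH VG : Type*} (H : SimpleGraph VH) (G : SimpleGraph VG) (k : ℕ) : Prop :=
  ∃ B : VH → Set VG,
    (∀ h, (B h).Nonempty) ∧
    (∀ h, (B h).Finite ∧ (B h).ncard < k) ∧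
    (∀ h h', h ≠ h' → Disjoint (B h) (B h')) ∧
    (∀ h, (G.induce (B h)).Connected) ∧
    (∀ h h', H.Adj h h' → ∃ a ∈ B h, ∃ b ∈ B h', G.Adj a b)

/-- The order on oriented separations: `(A,B) ≤ (C,D)` iff `A ⊆ C` and `D ⊆ B`. -/
def osLE {V : Type*} (s t : Set V × Set V) : Prop := s.1 ⊆ t.1 ∧ t.2 ⊆ s.2

/-- The reverse orientation of an oriented separation. -/
def swapSep {V : Type*} (s : Set V × Set V) : Set V × Set V := (s.2, s.1)

/-- Two (unordered) separations, given by representative orientations, are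
nested: they have comparable orientations. -/
def NestedSep {V : Type*} (s t : Set V × Set V) : Prop :=
  osLE s t ∨ osLE t s ∨ osLE s (swapSep t) ∨ osLE (swapSep s) t

/-- `σ` is an orientation of the set `N` of separations which is a star. -/
def IsStarOrientation {V : Type*} (N σ : Set (Set V × Set V)) : Prop :=
  (∀ s ∈ N, s ∈ σ ∨ swapSep s ∈ σ) ∧
  (∀ s ∈ N, ¬ (s ∈ σ ∧ swapSep s ∈ σ)) ∧
  (∀ t ∈ σ, t ∈ N ∨ swapSep t ∈ N) ∧
  (∀ s ∈ σ, ∀ t ∈ σ, s ≠ t → osLE s (swapSep t))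

/-- The set `N` of unitary compound-separations is faithful to the
compound-cutvertex `w` in `G`. -/
def FaithfulToVert {V : Type*} (G : SimpleGraph V) (N : Set (Set V × Set V)) (w : V) : Prop :=
  (∃ σ, IsStarOrientation {s ∈ N | s.1 ∩ s.2 = {w}} σ) ∧
  ∀ u v : V, (∃ A B, IsUnitaryCSep G A B w ∧ SepPair A B u v) →
    ∃ s ∈ N, s.1 ∩ s.2 = {w} ∧ SepPair s.1 s.2 u v

/-- The set `N` of unitary compound-separations is faithful to `G`. -/
def FaithfulSet {V : Type*} (G : SimpleGraph V) (N : Set (Set V × Set V)) : Prop :=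
  ∀ w : V, IsCompoundCutvertex G w → FaithfulToVert G N w

/-- A set of graphs is typical for the class of infinitely edge-connected
graphs with regard to the topological minor relation. -/
def TypicalTopMinor (𝓗 : Set (Σ V : Type, SimpleGraph V)) : Prop :=
  ∀ (W : Type) (G : SimpleGraph W), InfEdgeConn G → ∃ H ∈ 𝓗, TopMinor H.2 G



namespace GLAux

open List

variable {α : Type*}

theorem pair_mem {u v : α} {l : List α} (h : [u, v].Sublist l) : u ∈ l ∧ v ∈ l :=
  ⟨h.subset (by simp), h.subset (by simp)⟩

theorem idx_get [DecidableEq α] {u : α} {l : List α} (hu : u ∈ l) :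
    l[l.idxOf u]'(List.idxOf_lt_length_iff.mpr hu) = u :=
  List.getElem_idxOf (List.idxOf_lt_length_iff.mpr hu)

theorem indexOf_inj [DecidableEq α] {u v : α} {l : List α} (hu : u ∈ l) (hv : v ∈ l)
    (e : l.idxOf u = l.idxOf v) : u = v := by
  have h1 := idx_get hu
  have h2 := idx_get hv
  rw [← h1, ← h2]
  congr 1

theorem idx_lt [DecidableEq α] {u v : α} : ∀ {l : List α}, l.Nodup → [u, v].Sublist l →
    l.idxOf u < l.idxOf v := by
  intro l
  induction l with
  | nil => intro _ h; exact absurd (List.sublist_nil.mp h) (by simp)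
  | cons a t ih =>
    intro hnd h
    cases h with
    | cons _ h' =>
      have hu : u ∈ t := (pair_mem h').1
      have hv : v ∈ t := (pair_mem h').2
      have hna : a ∉ t := (List.nodup_cons.mp hnd).1
      have hua : a ≠ u := fun e => hna (e ▸ hu)
      have hva : a ≠ v := fun e => hna (e ▸ hv)
      rw [List.idxOf_cons_ne _ hua, List.idxOf_cons_ne _ hva]
      exact Nat.succ_lt_succ (ih (List.nodup_cons.mp hnd).2 h')
    | cons_cons _ h' =>
      have hv : v ∈ t := List.singleton_sublist.mp h'
      have hna : u ∉ t := (List.nodup_cons.mp hnd).1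
      have hva : u ≠ v := fun e => hna (e ▸ hv)
      rw [List.idxOf_cons_self, List.idxOf_cons_ne _ hva]
      exact Nat.succ_pos _

theorem sublist_of_idx [DecidableEq α] {u v : α} : ∀ {l : List α}, u ∈ l → v ∈ l →
    l.idxOf u < l.idxOf v → [u, v].Sublist l := by
  intro l
  induction l with
  | nil => intro h; exact absurd h (by simp)
  | cons a t ih =>
    intro hu hv hlt
    by_cases hua : u = a
    · subst hua
      rw [List.idxOf_cons_self] at hlt
      have hva : v ≠ u := by
        intro e; subst e; rw [List.idxOf_cons_self] at hlt; omega
      have hv' : v ∈ t := by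
        rcases List.mem_cons.mp hv with h | h
        · exact absurd h hva
        · exact h
      exact (List.singleton_sublist.mpr hv').cons₂ u
    · have hva : v ≠ a := by
        intro e; subst e
        rw [List.idxOf_cons_self] at hlt; omega
      have hu' : u ∈ t := by rcases List.mem_cons.mp hu with h | h; exact absurd h hua; exact h
      have hv' : v ∈ t := by rcases List.mem_cons.mp hv with h | h; exact absurd h hva; exact h
      rw [List.idxOf_cons_ne _ (Ne.symm hua), List.idxOf_cons_ne _ (Ne.symm hva)] at hlt
      exact (ih hu' hv' (Nat.lt_of_succ_lt_succ hlt)).cons a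

theorem triple_of_idx [DecidableEq α] {u w v : α} : ∀ {l : List α}, u ∈ l → w ∈ l → v ∈ l →
    l.idxOf u < l.idxOf w → l.idxOf w < l.idxOf v → [u, w, v].Sublist l := by
  intro l
  induction l with
  | nil => intro h; exact absurd h (by simp)
  | cons a t ih =>
    intro hu hw hv h1 h2
    by_cases hua : u = a
    · subst hua
      rw [List.idxOf_cons_self] at h1
      have hwa : w ≠ u := by intro e; subst e; rw [List.idxOf_cons_self] at h1; omega
      have hva : v ≠ u := by intro e; subst e; rw [List.idxOf_cons_self] at h2; omega
      have hw' : w ∈ t := by rcases List.mem_cons.mp hw with h | h; exact absurd h hwa; exact h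
      have hv' : v ∈ t := by rcases List.mem_cons.mp hv with h | h; exact absurd h hva; exact h
      rw [List.idxOf_cons_ne _ (Ne.symm hwa), List.idxOf_cons_ne _ (Ne.symm hva)] at h2
      exact (sublist_of_idx hw' hv' (Nat.lt_of_succ_lt_succ h2)).cons₂ u
    · have hwa : w ≠ a := by
        intro e; subst e; rw [List.idxOf_cons_self] at h1; omega
      have hva : v ≠ a := by
        intro e; subst e; rw [List.idxOf_cons_self] at h2; omega
      have hu' : u ∈ t := by rcases List.mem_cons.mp hu with h | h; exact absurd h hua; exact h
      have hw' : w ∈ t := by rcases List.mem_cons.mp hw with h | h; exact absurd h hwa; exact h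
      have hv' : v ∈ t := by rcases List.mem_cons.mp hv with h | h; exact absurd h hva; exact h
      rw [List.idxOf_cons_ne _ (Ne.symm hua), List.idxOf_cons_ne _ (Ne.symm hwa)] at h1
      rw [List.idxOf_cons_ne _ (Ne.symm hwa), List.idxOf_cons_ne _ (Ne.symm hva)] at h2
      exact (ih hu' hw' hv' (Nat.lt_of_succ_lt_succ h1) (Nat.lt_of_succ_lt_succ h2)).cons a

theorem before_asymm {u v : α} {l : List α} (hl : l.Nodup) (h1 : [u, v].Sublist l)
    (h2 : [v, u].Sublist l) : False := by
  classical
  have := idx_lt hl h1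
  have := idx_lt hl h2
  omega

theorem before_trans {u w v : α} {l : List α} (hl : l.Nodup) (h1 : [u, w].Sublist l)
    (h2 : [w, v].Sublist l) : [u, v].Sublist l := by
  classical
  exact sublist_of_idx (pair_mem h1).1 (pair_mem h2).2 ((idx_lt hl h1).trans (idx_lt hl h2))

theorem before_total {u v : α} {l : List α} (hl : l.Nodup) (hu : u ∈ l) (hv : v ∈ l)
    (hne : u ≠ v) : [u, v].Sublist l ∨ [v, u].Sublist l := by
  classical
  have hi : l.idxOf u ≠ l.idxOf v := fun e => hne (indexOf_inj hu hv e)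
  rcases Nat.lt_or_ge (l.idxOf u) (l.idxOf v) with h | h
  · exact Or.inl (sublist_of_idx hu hv h)
  · exact Or.inr (sublist_of_idx hv hu (by omega))

theorem before_triple {u w v : α} {l : List α} (hl : l.Nodup) (h1 : [u, w].Sublist l)
    (h2 : [w, v].Sublist l) : [u, w, v].Sublist l := by
  classical
  exact triple_of_idx (pair_mem h1).1 (pair_mem h1).2 (pair_mem h2).2 (idx_lt hl h1) (idx_lt hl h2)

theorem pair_decomp {u v : α} : ∀ {l : List α}, [u, v].Sublist l →
    ∃ l₁ l₂, l = l₁ ++ u :: l₂ ∧ v ∈ l₂ := by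
  intro l
  induction l with
  | nil => intro h; exact absurd (List.sublist_nil.mp h) (by simp)
  | cons a t ih =>
    intro h
    cases h with
    | cons _ h' =>
      obtain ⟨l₁, l₂, rfl, hv⟩ := ih h'
      exact ⟨a :: l₁, l₂, rfl, hv⟩
    | cons_cons _ h' =>
      exact ⟨[], t, rfl, List.singleton_sublist.mp h'⟩

theorem nothing_after_last {u v : α} {l : List α} (hl : l.Nodup) (hne : l ≠ [])
    (hlast : l.getLast hne = u) (h : [u, v].Sublist l) : False := by
  obtain ⟨l₁, l₂, rfl, hv⟩ := pair_decomp h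
  have hl₂ : l₂ ≠ [] := fun e => by subst e; simp at hv
  have h1 : (l₁ ++ u :: l₂).getLast hne = l₂.getLast hl₂ := by
    rw [List.getLast_append_of_right_ne_nil l₁ (u :: l₂) (by simp)]
    exact List.getLast_cons hl₂
  have hu2 : u ∈ l₂ := by
    rw [hlast] at h1; rw [h1]; exact List.getLast_mem hl₂
  have : (u :: l₂).Nodup := (List.nodup_append.mp hl).2.1
  exact (List.nodup_cons.mp this).1 hu2

theorem pair_append {u v : α} {l₁ l₂ : List α} (h : [u, v].Sublist (l₁ ++ l₂)) :
    [u, v].Sublist l₁ ∨ (u ∈ l₁ ∧ v ∈ l₂) ∨ [u, v].Sublist l₂ := by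
  induction l₁ with
  | nil => exact Or.inr (Or.inr h)
  | cons a t ih =>
    cases h with
    | cons _ h' =>
      rcases ih h' with h | h | h
      · exact Or.inl (h.cons a)
      · exact Or.inr (Or.inl ⟨List.mem_cons_of_mem a h.1, h.2⟩)
      · exact Or.inr (Or.inr h)
    | cons_cons _ h' =>
      have hv : v ∈ t ++ l₂ := List.singleton_sublist.mp h'
      rcases List.mem_append.mp hv with h | h
      · exact Or.inl ((List.singleton_sublist.mpr h).cons₂ u)
      · exact Or.inr (Or.inl ⟨List.mem_cons_self, h⟩)









variable {V : Type*} {G : SimpleGraph V}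

theorem mem_edge_support {s t z : V} {p : G.Walk s t} {e : Sym2 V} (he : e ∈ p.edges)
    (hz : z ∈ e) : z ∈ p.support := by
  induction e with
  | _ x y =>
    rcases Sym2.mem_iff.mp hz with rfl | rfl
    · exact p.fst_mem_support_of_mem_edges he
    · exact p.snd_mem_support_of_mem_edges he

theorem support_getLast? {s t : V} (p : G.Walk s t) : p.support.getLast? = some t := by
  induction p with
  | nil => simp
  | cons h p ih =>
    rw [Walk.support_cons, p.support_eq_cons, List.getLast?_cons_cons, ← p.support_eq_cons]
    exact ih

theorem support_getLast {s t : V} (p : G.Walk s t) :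
    p.support.getLast p.support_ne_nil = t := by
  have h := support_getLast? p
  rw [List.getLast?_eq_getLast p.support_ne_nil] at h
  exact Option.some.inj h

theorem mem_edge_of_support_aux {s t : V} (p : G.Walk s t) (z : V) (hz : z ∈ p.support) :
    z = t ∨ ∃ e ∈ p.edges, z ∈ e := by
  induction p with
  | nil => left; simpa using hz
  | cons h p ih =>
    rename_i u v w
    rw [Walk.support_cons, List.mem_cons] at hz
    rcases hz with rfl | hz
    · exact Or.inr ⟨s(z, v), by simp, Sym2.mem_mk_left _ _⟩
    · rcases ih hz with rfl | ⟨e, he, hze⟩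
      · exact Or.inl rfl
      · exact Or.inr ⟨e, by simp [he], hze⟩

theorem mem_edge_of_support {s t : V} (p : G.Walk s t) (hst : s ≠ t) (z : V)
    (hz : z ∈ p.support) : ∃ e ∈ p.edges, z ∈ e := by
  rcases mem_edge_of_support_aux p z hz with rfl | h
  · -- z = t : use the reverse walk
    have hz' : z ∈ p.reverse.support := by
      rw [Walk.support_reverse]; exact List.mem_reverse.mpr hz
    rcases mem_edge_of_support_aux p.reverse z hz' with rfl | ⟨e, he, hze⟩
    · exact absurd rfl hst
    · refine ⟨e, ?_, hze⟩
      rwa [Walk.edges_reverse, List.mem_reverse] at he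
  · exact h

/-- the start vertex of a path lies in at most one of its edges -/
theorem start_edge_unique {b t : V} (p : G.Walk b t) (hp : p.IsPath) {e₁ e₂ : Sym2 V}
    (h₁ : e₁ ∈ p.edges) (h₂ : e₂ ∈ p.edges) (hb₁ : b ∈ e₁) (hb₂ : b ∈ e₂) : e₁ = e₂ := by
  cases p with
  | nil => simp at h₁
  | cons h q =>
    rw [Walk.edges_cons, List.mem_cons] at h₁ h₂
    have hq := (Walk.cons_isPath_iff _ _).mp hp
    have key : ∀ e : Sym2 V, e ∈ q.edges → b ∈ e → False := fun e he hbe =>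
      hq.2 (mem_edge_support he hbe)
    rcases h₁ with rfl | h₁
    · rcases h₂ with rfl | h₂
      · rfl
      · exact absurd (key _ h₂ hb₂) not_false
    · exact absurd (key _ h₁ hb₁) not_false

/-- no vertex of a path lies in three distinct edges of it -/
theorem three_edges {s t : V} (p : G.Walk s t) (hp : p.IsPath) (z : V) (e₁ e₂ e₃ : Sym2 V)
    (h₁ : e₁ ∈ p.edges) (h₂ : e₂ ∈ p.edges) (h₃ : e₃ ∈ p.edges)
    (h12 : e₁ ≠ e₂) (h13 : e₁ ≠ e₃) (h23 : e₂ ≠ e₃)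
    (hz₁ : z ∈ e₁) (hz₂ : z ∈ e₂) (hz₃ : z ∈ e₃) : False := by
  induction p with
  | nil => simp at h₁
  | cons h q ih =>
    rename_i u v w
    have hq := (Walk.cons_isPath_iff _ _).mp hp
    rw [Walk.edges_cons, List.mem_cons] at h₁ h₂ h₃
    -- helper for the case where one edge is the head edge
    have key : ∀ e e' : Sym2 V, e ∈ q.edges → e' ∈ q.edges → e ≠ e' →
        z ∈ s(u, v) → z ∈ e → z ∈ e' → False := by
      intro e e' he he' hee hzh hze hze'
      rcases Sym2.mem_iff.mp hzh with rfl | rfl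
      · exact hq.2 (mem_edge_support he hze)
      · exact hee (start_edge_unique q hq.1 he he' hze hze')
    rcases h₁ with rfl | h₁
    · rcases h₂ with rfl | h₂
      · exact h12 rfl
      · rcases h₃ with rfl | h₃
        · exact h13 rfl
        · exact key _ _ h₂ h₃ h23 hz₁ hz₂ hz₃
    · rcases h₂ with rfl | h₂
      · rcases h₃ with rfl | h₃
        · exact h23 rfl
        · exact key _ _ h₁ h₃ h13 hz₂ hz₁ hz₃
      · rcases h₃ with rfl | h₃
        · exact key _ _ h₁ h₂ h12 hz₃ hz₁ hz₂
        · exact ih hq.1 h₁ h₂ h₃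

/-- on a path, no vertex lies strictly between the two endpoints of an edge -/
theorem no_mid {s t p q v : V} (W : G.Walk s t) (hW : W.IsPath) (he : s(p, q) ∈ W.edges)
    (hvp : v ≠ p) (hvq : v ≠ q) : ¬ [p, v, q].Sublist W.support := by
  induction W with
  | nil => simp at he
  | cons h W' ih =>
    rename_i a b c
    intro hsub
    have hq := (Walk.cons_isPath_iff _ _).mp hW
    rw [Walk.edges_cons, List.mem_cons] at he
    rw [Walk.support_cons] at hsub
    rcases he with he | he
    · -- s(p,q) = s(a,b)
      rw [Sym2.eq_iff] at he
      rcases he with ⟨rfl, rfl⟩ | ⟨rfl, rfl⟩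
      · -- p = a, q = b
        cases hsub with
        | cons _ h' =>
          exact hq.2 (h'.subset (by simp))
        | cons_cons _ h' =>
          -- [v, q] <+ W'.support with q = head of W'.support
          have hW'supp := W'.support_eq_cons
          rw [hW'supp] at h'
          cases h' with
          | cons _ h'' =>
            have : q ∈ W'.support.tail := (pair_mem h'').2
            have hnd : W'.support.Nodup := hq.1.support_nodup
            rw [hW'supp] at hnd
            exact (List.nodup_cons.mp hnd).1 this
          | cons_cons _ h'' => exact hvq rfl
      · -- p = b, q = a
        cases hsub with
        | cons _ h' =>
          exact hq.2 (h'.subset (by simp))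
        | cons_cons _ h' => exact (G.ne_of_adj h) rfl
    · -- s(p,q) ∈ W'.edges
      have hpW' : p ∈ W'.support := W'.fst_mem_support_of_mem_edges he
      cases hsub with
      | cons _ h' => exact ih hq.1 he h'
      | cons_cons _ h' => exact hq.2 hpW'

theorem no_mid' {s t p q v : V} (W : G.Walk s t) (hW : W.IsPath) (he : s(p, q) ∈ W.edges)
    (hvp : v ≠ p) (hvq : v ≠ q) : ¬ [q, v, p].Sublist W.support :=
  no_mid W hW (by rwa [Sym2.eq_swap] at he) hvq hvp


theorem ext_walk [DecidableEq V] {s t a b c : V} (W : G.Walk s t)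
    (hW : W.IsPath) (hac : [a, c].Sublist W.support) (hba : b ≠ a) (hbc : b ≠ c)
    (hb : b ∉ W.support ∨ [b, a].Sublist W.support ∨ [c, b].Sublist W.support) :
    ∃ W' : G.Walk a c, (∀ e ∈ W'.edges, e ∈ W.edges) ∧ b ∉ W'.support := by
  have ha : a ∈ W.support := (pair_mem hac).1
  have hc0 : c ∈ W.support := (pair_mem hac).2
  have hnd : W.support.Nodup := hW.support_nodup
  rcases hb with hb | hb | hb
  rotate_right
  · -- Case B : [c, b] <+ W.support ; use takeUntil c then dropUntil a
    set T := W.takeUntil c hc0 with hT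
    set D := W.dropUntil c hc0 with hD
    have hsplit : W.support = T.support ++ D.support.tail := by
      conv_lhs => rw [← Walk.take_spec W hc0]
      rw [Walk.support_append]
    have hnd' : (T.support ++ D.support.tail).Nodup := hsplit ▸ hnd
    have hS₁nd : T.support.Nodup := hnd'.sublist (List.sublist_append_left _ _)
    have hdisj : T.support.Disjoint D.support.tail := List.disjoint_of_nodup_append hnd'
    have hlastc : T.support.getLast T.support_ne_nil = c := support_getLast T
    have hcS₁ : c ∈ T.support := T.end_mem_support
    have ha2 : a ∈ T.support := by
      rw [hsplit] at hac
      rcases pair_append hac with h | h | h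
      · exact (pair_mem h).1
      · exact h.1
      · exact absurd ((pair_mem h).2) (fun hh => hdisj hcS₁ hh)
    have hbS₁ : b ∉ T.support := by
      rw [hsplit] at hb
      rcases pair_append hb with h | h | h
      · exact absurd h (fun hh => nothing_after_last hS₁nd _ hlastc hh)
      · exact fun hh => hdisj hh h.2
      · exact absurd ((pair_mem h).1) (fun hh => hdisj hcS₁ hh)
    refine ⟨T.dropUntil a ha2, fun e he => ?_, fun hh => hbS₁ (T.support_dropUntil_subset ha2 hh)⟩
    exact W.edges_takeUntil_subset hc0 (T.edges_dropUntil_subset ha2 he)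
  all_goals {
    -- Cases A : b ∉ W.support, or [b, a] <+ W.support; use dropUntil a then takeUntil c
    set T := W.takeUntil a ha with hT
    set D := W.dropUntil a ha with hD
    have hsplit : W.support = T.support ++ D.support.tail := by
      conv_lhs => rw [← Walk.take_spec W ha]
      rw [Walk.support_append]
    have hnd' : (T.support ++ D.support.tail).Nodup := hsplit ▸ hnd
    have hS₁nd : T.support.Nodup := hnd'.sublist (List.sublist_append_left _ _)
    have hdisj : T.support.Disjoint D.support.tail := List.disjoint_of_nodup_append hnd'
    have hlasta : T.support.getLast T.support_ne_nil = a := support_getLast T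
    have haS₁ : a ∈ T.support := T.end_mem_support
    have hc2 : c ∈ D.support := by
      rw [hsplit] at hac
      rcases pair_append hac with h | h | h
      · exact absurd h (fun hh => nothing_after_last hS₁nd _ hlasta hh)
      · exact List.mem_of_mem_tail h.2
      · exact List.mem_of_mem_tail (pair_mem h).2
    have hbD : b ∉ D.support := by
      have hDsupp : D.support = a :: D.support.tail := D.support_eq_cons
      rw [hDsupp, List.mem_cons]
      rintro (rfl | hbtail)
      · exact hba rfl
      · first
        | exact hb (hsplit ▸ List.mem_append_right _ hbtail)
        | {rw [hsplit] at hb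
           rcases pair_append hb with h | h | h
           · exact hdisj (pair_mem h).1 hbtail
           · exact hdisj haS₁ h.2
           · exact hdisj haS₁ ((pair_mem h).2)}
    refine ⟨D.takeUntil c hc2, fun e he => ?_, fun hh => hbD (D.support_takeUntil_subset hc2 hh)⟩
    exact W.edges_dropUntil_subset ha (D.edges_takeUntil_subset hc2 he)
  }

end GLAux

namespace GLAux

theorem nat_gap {Q : ℕ → Prop} {i n : ℕ} (hin : i < n) (hQ0 : Q 0) (hQl : Q (n - 1))
    (hQi : ¬ Q i) :
    ∃ j k, j < i ∧ i < k ∧ k ≤ n - 1 ∧ Q j ∧ Q k ∧ ∀ t, j < t → t < k → ¬ Q t := by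
  classical
  have hil : i ≠ n - 1 := fun e => hQi (e ▸ hQl)
  have hk_ex : ∃ t, i < t ∧ Q t := ⟨n - 1, by omega, hQl⟩
  have hspec := Nat.find_spec hk_ex
  refine ⟨Nat.findGreatest Q i, Nat.find hk_ex, ?_, hspec.1, ?_, Nat.findGreatest_spec (Nat.zero_le i) hQ0, hspec.2, ?_⟩
  · exact lt_of_le_of_ne (Nat.findGreatest_le i)
      (fun e => hQi (e ▸ Nat.findGreatest_spec (Nat.zero_le i) hQ0))
  · exact Nat.find_min' hk_ex ⟨by omega, hQl⟩
  · intro t h1 h2 hQt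
    rcases Nat.lt_or_ge i t with h | h
    · exact Nat.find_min hk_ex h2 ⟨h, hQt⟩
    · rcases Nat.lt_or_ge t i with h' | h'
      · exact Nat.findGreatest_is_greatest h1 h'.le hQt
      · have ht : t = i := by omega
        exact hQi (ht ▸ hQt)

end GLAux

namespace GrainLine
open GLAux List SimpleGraph

variable {V : Type*} {G : SimpleGraph V} {x y : V}

theorem before_def {l : List V} {u v : V} : Before l u v ↔ [u, v].Sublist l := Iff.rfl

theorem edge_unique (gl : GrainLine G x y) {e : Sym2 V} {m n : ℕ}
    (hm : e ∈ (gl.P m).edges) (hn : e ∈ (gl.P n).edges) : m = n := by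
  by_contra h
  exact gl.edgeDisj m n h e hm hn

theorem mem_P_mono (gl : GrainLine G x y) {v : V} (hv : v ∈ gl.L) {m n : ℕ}
    (hm : v ∈ (gl.P m).support) (hmn : m ≤ n) : v ∈ (gl.P n).support := by
  obtain ⟨N, hN⟩ := (gl.gl1 v).mp hv
  exact (hN n).mpr (Nat.le_trans ((hN m).mp hm) hmn)

theorem llt_mem_support (gl : GrainLine G x y) {v : V} {d : ℕ} (hv : v ∈ gl.Llt d) :
    v ∈ (gl.P d).support := by
  obtain ⟨hvL, m, hm, hms⟩ := hv
  exact gl.mem_P_mono hvL hms hm.le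

theorem x_mem_llt (gl : GrainLine G x y) {d : ℕ} (hd : 0 < d) : x ∈ gl.Llt d :=
  ⟨gl.x_mem, 0, hd, (gl.P 0).start_mem_support⟩

theorem y_mem_llt (gl : GrainLine G x y) {d : ℕ} (hd : 0 < d) : y ∈ gl.Llt d :=
  ⟨gl.y_mem, 0, hd, (gl.P 0).end_mem_support⟩

theorem gl3' (gl : GrainLine G x y) {d : ℕ} (hd : 1 ≤ d) {u v : V} (hu : u ∈ gl.Llt d)
    (hv : v ∈ gl.Llt d) (hne : u ≠ v) : gl.le u v ↔ [u, v].Sublist (gl.P d).support :=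
  gl.gl3 d hd u v hu.1 hv.1 hu.2 hv.2 hne

theorem idx_of_getElem [DecidableEq V] {l : List V} (hnd : l.Nodup) {t : ℕ} (h : t < l.length) :
    l.idxOf (l[t]'h) = t := by
  have hmem : l[t]'h ∈ l := List.getElem_mem h
  have := idx_get hmem
  exact (List.Nodup.getElem_inj_iff hnd).mp this


theorem seg_exists [DecidableEq V] (gl : GrainLine G x y) {d : ℕ} (hd : 1 ≤ d) {z : V}
    (hz : z ∈ (gl.P d).support) (hznot : z ∉ gl.Llt d) :
    ∃ u₀ w₀, gl.IsSegEnds d u₀ w₀ ∧ [u₀, z].Sublist (gl.P d).support ∧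
      [z, w₀].Sublist (gl.P d).support ∧
      ∀ v' ∈ gl.Llt d, v' = u₀ ∨ v' = w₀ ∨ [v', u₀].Sublist (gl.P d).support ∨
        [w₀, v'].Sublist (gl.P d).support := by
  classical
  have hnd : (gl.P d).support.Nodup := (gl.isPath d).support_nodup
  have hlen : 0 < (gl.P d).support.length := List.length_pos_iff.mpr (gl.P d).support_ne_nil
  have hi : (gl.P d).support.idxOf z < (gl.P d).support.length := List.idxOf_lt_length_iff.mpr hz
  have hhead : (gl.P d).support.getD 0 x = x := by
    conv_lhs => rw [(gl.P d).support_eq_cons]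
    rfl
  have hne' : (gl.P d).support ≠ [] := (gl.P d).support_ne_nil
  have hlast : (gl.P d).support.getD ((gl.P d).support.length - 1) x = y := by
    rw [List.getD_eq_getElem _ _ (by omega)]
    have h1 : (gl.P d).support.getLast hne' = y := support_getLast _
    exact (List.getLast_eq_getElem _).symm.trans h1
  have hQi : ¬ ((gl.P d).support.idxOf z < (gl.P d).support.length ∧ (gl.P d).support.getD ((gl.P d).support.idxOf z) x ∈ gl.Llt d) := by
    rintro ⟨h, hmem⟩
    rw [List.getD_eq_getElem _ _ h, idx_get hz] at hmem
    exact hznot hmem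
  obtain ⟨j, k, hjlt, hik, hkle, hQj, hQk, hmid⟩ :=
    nat_gap (Q := fun t => t < (gl.P d).support.length ∧ (gl.P d).support.getD t x ∈ gl.Llt d) hi
      ⟨hlen, by rw [hhead]; exact gl.x_mem_llt hd⟩
      ⟨by omega, by rw [hlast]; exact gl.y_mem_llt hd⟩ hQi
  obtain ⟨hjl, hjmem⟩ := hQj
  obtain ⟨hkl, hkmem⟩ := hQk
  have hu₀m : (gl.P d).support.getD j x ∈ (gl.P d).support := by
    rw [List.getD_eq_getElem _ _ hjl]; exact List.getElem_mem hjl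
  have hw₀m : (gl.P d).support.getD k x ∈ (gl.P d).support := by
    rw [List.getD_eq_getElem _ _ hkl]; exact List.getElem_mem hkl
  have idxu : (gl.P d).support.idxOf ((gl.P d).support.getD j x) = j := by
    rw [List.getD_eq_getElem _ _ hjl]; exact idx_of_getElem hnd hjl
  have idxw : (gl.P d).support.idxOf ((gl.P d).support.getD k x) = k := by
    rw [List.getD_eq_getElem _ _ hkl]; exact idx_of_getElem hnd hkl
  have hgap : ∀ v' ∈ gl.Llt d, v' = (gl.P d).support.getD j x ∨ v' = (gl.P d).support.getD k x ∨
      [v', (gl.P d).support.getD j x].Sublist (gl.P d).support ∨ [(gl.P d).support.getD k x, v'].Sublist (gl.P d).support := by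
    intro v' hv'
    have hv'm : v' ∈ (gl.P d).support := gl.llt_mem_support hv'
    have htl : (gl.P d).support.idxOf v' < (gl.P d).support.length := List.idxOf_lt_length_iff.mpr hv'm
    have hv't : (gl.P d).support.getD ((gl.P d).support.idxOf v') x = v' := by
      rw [List.getD_eq_getElem _ _ htl]; exact idx_get hv'm
    have hQt : (gl.P d).support.idxOf v' < (gl.P d).support.length ∧ (gl.P d).support.getD ((gl.P d).support.idxOf v') x ∈ gl.Llt d :=
      ⟨htl, by rw [hv't]; exact hv'⟩
    rcases Nat.lt_trichotomy ((gl.P d).support.idxOf v') j with h | h | h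
    · exact Or.inr (Or.inr (Or.inl (sublist_of_idx hv'm hu₀m (by omega))))
    · left; rw [← hv't, h]
    · have htk : k ≤ (gl.P d).support.idxOf v' := by
        by_contra hc
        exact hmid _ h (by omega) hQt
      rcases Nat.eq_or_lt_of_le htk with h' | h'
      · right; left; rw [← hv't, h']
      · exact Or.inr (Or.inr (Or.inr (sublist_of_idx hw₀m hv'm (by omega))))
  have hbu : [(gl.P d).support.getD j x, z].Sublist (gl.P d).support := sublist_of_idx hu₀m hz (by omega)
  have hbw : [z, (gl.P d).support.getD k x].Sublist (gl.P d).support := sublist_of_idx hz hw₀m (by omega)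
  have hbuw : [(gl.P d).support.getD j x, (gl.P d).support.getD k x].Sublist (gl.P d).support := sublist_of_idx hu₀m hw₀m (by omega)
  have hneu : (gl.P d).support.getD j x ≠ (gl.P d).support.getD k x := by
    intro e
    rw [e] at idxu
    omega
  have hle : gl.le ((gl.P d).support.getD j x) ((gl.P d).support.getD k x) :=
    (gl.gl3' hd hjmem hkmem hneu).mpr hbuw
  refine ⟨(gl.P d).support.getD j x, (gl.P d).support.getD k x, ⟨hjmem, hkmem, hneu, hle, ?_⟩, hbu, hbw, hgap⟩
  intro z' hz' hle1 hle2
  by_contra hc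
  push_neg at hc
  obtain ⟨hcu, hcw⟩ := hc
  have hz'm : z' ∈ (gl.P d).support := gl.llt_mem_support hz'
  have hb1 : [(gl.P d).support.getD j x, z'].Sublist (gl.P d).support := (gl.gl3' hd hjmem hz' (Ne.symm hcu)).mp hle1
  have hb2 : [z', (gl.P d).support.getD k x].Sublist (gl.P d).support := (gl.gl3' hd hz' hkmem hcw).mp hle2
  have h1 := idx_lt hnd hb1
  have h2 := idx_lt hnd hb2
  rw [idxu] at h1
  rw [idxw] at h2
  have htl : (gl.P d).support.idxOf z' < (gl.P d).support.length := List.idxOf_lt_length_iff.mpr hz'm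
  refine hmid ((gl.P d).support.idxOf z') h1 h2 ⟨htl, ?_⟩
  rw [List.getD_eq_getElem _ _ htl, idx_get hz'm]
  exact hz'

end GrainLine

namespace GrainLine
open GLAux List SimpleGraph

variable {V : Type*} {G : SimpleGraph V} {x y : V}

/-- CLAIM 1: for `d > D` (the depth of `v`), an `L`-vertex `z` on `P d` is before `v`
on `P d` iff `z ≤_L v`. -/
theorem claim1 [DecidableEq V] (gl : GrainLine G x y) (hws : gl.WellStructured) {v : V}
    (hv : v ∈ gl.L) {D : ℕ} (hD : ∀ n, v ∈ (gl.P n).support ↔ D ≤ n) {d : ℕ} (hd : D < d)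
    {z : V} (hzL : z ∈ gl.L) (hzs : z ∈ (gl.P d).support) (hzv : z ≠ v) :
    ([z, v].Sublist (gl.P d).support ↔ gl.le z v) := by
  have hd1 : 1 ≤ d := by omega
  have hnd : (gl.P d).support.Nodup := (gl.isPath d).support_nodup
  have hvLlt : v ∈ gl.Llt d := ⟨hv, D, hd, (hD D).mpr le_rfl⟩
  by_cases hzllt : z ∈ gl.Llt d
  · exact (gl.gl3' hd1 hzllt hvLlt hzv).symm
  · obtain ⟨u₀, w₀, hseg, h1, h2, hgap⟩ := gl.seg_exists hd1 hzs hzllt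
    obtain ⟨hu₀llt, hw₀llt, hne, hleuw, hsucc⟩ := hseg
    have htrip : [u₀, z, w₀].Sublist (gl.P d).support := before_triple hnd h1 h2
    obtain ⟨hle1, hle2⟩ := hws d u₀ w₀ ⟨hu₀llt, hw₀llt, hne, hleuw, hsucc⟩ z hzL
      (Or.inr (Or.inr htrip))
    have hzu : z ≠ u₀ := fun e => hzllt (e ▸ hu₀llt)
    have hzw : z ≠ w₀ := fun e => hzllt (e ▸ hw₀llt)
    rcases hgap v hvLlt with rfl | rfl | hb | hb
    · -- v = u₀ : both sides false
      refine iff_of_false (fun h => before_asymm hnd h h1) (fun hle => hzu ?_)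
      exact gl.le_antisymm z hzL v hu₀llt.1 hle hle1
    · -- v = w₀ : both sides true
      exact iff_of_true h2 hle2
    · -- v strictly before u₀
      have hvu : v ≠ u₀ := by
        intro e
        subst e
        exact before_asymm hnd hb hb
      have hlev : gl.le v u₀ := (gl.gl3' hd1 hvLlt hu₀llt hvu).mpr hb
      refine iff_of_false (fun h => before_asymm hnd (before_trans hnd h hb) h1)
        (fun hle => hzu ?_)
      have hzu₀ : gl.le z u₀ := gl.le_trans z hzL v hv u₀ hu₀llt.1 hle hlev
      exact gl.le_antisymm z hzL u₀ hu₀llt.1 hzu₀ hle1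
    · -- w₀ strictly before v
      have hwv : w₀ ≠ v := by
        intro e
        subst e
        exact before_asymm hnd hb hb
      have hlev : gl.le w₀ v := (gl.gl3' hd1 hw₀llt hvLlt hwv).mpr hb
      exact iff_of_true (before_trans hnd h2 hb) (gl.le_trans z hzL w₀ hw₀llt.1 v hv hle2 hlev)

/-- `z` lies on the left of `v` (strictly before `v` on some deep path). -/
def Lft (gl : GrainLine G x y) (v : V) (D : ℕ) (z : V) : Prop :=
  ∃ d, D < d ∧ z ∈ (gl.P d).support ∧ [z, v].Sublist (gl.P d).support

def Rgt (gl : GrainLine G x y) (v : V) (D : ℕ) (z : V) : Prop :=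
  ∃ d, D < d ∧ z ∈ (gl.P d).support ∧ [v, z].Sublist (gl.P d).support

variable [DecidableEq V] {gl : GrainLine G x y} {v : V} {D : ℕ}

/-- Side is well-defined: a left vertex is before `v` on every deep path containing it. -/
theorem Lft.before (hws : gl.WellStructured) (hv : v ∈ gl.L)
    (hD : ∀ n, v ∈ (gl.P n).support ↔ D ≤ n) {z : V} (hz : gl.Lft v D z) (hzv : z ≠ v)
    {d : ℕ} (hd : D < d) (hzd : z ∈ (gl.P d).support) : [z, v].Sublist (gl.P d).support := by
  obtain ⟨d', hd', hzd', hb⟩ := hz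
  by_cases hzL : z ∈ gl.L
  · exact (gl.claim1 hws hv hD hd hzL hzd hzv).mpr
      ((gl.claim1 hws hv hD hd' hzL hzd' hzv).mp hb)
  · have : d' = d := by
      by_contra hne
      exact gl.gl2 d' z hzd' hzL d (fun e => hne e.symm) hzd
    exact this ▸ hb

theorem Rgt.before (hws : gl.WellStructured) (hv : v ∈ gl.L)
    (hD : ∀ n, v ∈ (gl.P n).support ↔ D ≤ n) {z : V} (hz : gl.Rgt v D z) (hzv : z ≠ v)
    {d : ℕ} (hd : D < d) (hzd : z ∈ (gl.P d).support) : [v, z].Sublist (gl.P d).support := by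
  obtain ⟨d', hd', hzd', hb⟩ := hz
  have hvd : v ∈ (gl.P d).support := (hD d).mpr hd.le
  have hvd' : v ∈ (gl.P d').support := (hD d').mpr hd'.le
  have hnd : (gl.P d).support.Nodup := (gl.isPath d).support_nodup
  have hnd' : (gl.P d').support.Nodup := (gl.isPath d').support_nodup
  by_cases hzL : z ∈ gl.L
  · have hlev : gl.le v z := by
      rcases gl.le_total v hv z hzL with h | h
      · exact h
      · exfalso
        exact before_asymm hnd' ((gl.claim1 hws hv hD hd' hzL hzd' hzv).mpr h) hb
    rcases before_total hnd hzd hvd hzv with h | h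
    · exfalso
      have hle' := (gl.claim1 hws hv hD hd hzL hzd hzv).mp h
      exact hzv (gl.le_antisymm z hzL v hv hle' hlev)
    · exact h
  · have : d' = d := by
      by_contra hne
      exact gl.gl2 d' z hzd' hzL d (fun e => hne e.symm) hzd
    exact this ▸ hb

theorem not_lft_rgt (hws : gl.WellStructured) (hv : v ∈ gl.L)
    (hD : ∀ n, v ∈ (gl.P n).support ↔ D ≤ n) {z : V} (hzv : z ≠ v) (h1 : gl.Lft v D z)
    (h2 : gl.Rgt v D z) : False := by
  obtain ⟨d, hd, hzd, _⟩ := id h1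
  have hb1 : [z, v].Sublist (gl.P d).support := Lft.before hws hv hD h1 hzv hd hzd
  have hb2 : [v, z].Sublist (gl.P d).support := Rgt.before hws hv hD h2 hzv hd hzd
  exact before_asymm (gl.isPath d).support_nodup hb1 hb2

/-- an edge of a deep path preserves sides -/
theorem edge_step (hws : gl.WellStructured) (hv : v ∈ gl.L)
    (hD : ∀ n, v ∈ (gl.P n).support ↔ D ≤ n) {z₁ z₂ : V} {d : ℕ} (hd : D < d)
    (he : s(z₁, z₂) ∈ (gl.P d).edges) (h1v : z₁ ≠ v) (h2v : z₂ ≠ v) (h1 : gl.Lft v D z₁) :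
    gl.Lft v D z₂ := by
  have hz₁ : z₁ ∈ (gl.P d).support := (gl.P d).fst_mem_support_of_mem_edges he
  have hz₂ : z₂ ∈ (gl.P d).support := (gl.P d).snd_mem_support_of_mem_edges he
  have hvd : v ∈ (gl.P d).support := (hD d).mpr hd.le
  have hnd : (gl.P d).support.Nodup := (gl.isPath d).support_nodup
  have hb1 : [z₁, v].Sublist (gl.P d).support := Lft.before hws hv hD h1 h1v hd hz₁
  refine ⟨d, hd, hz₂, ?_⟩
  rcases before_total hnd hz₂ hvd h2v with h | h
  · exact h
  · exfalso
    exact no_mid (gl.P d) (gl.isPath d) he h1v.symm h2v.symm (before_triple hnd hb1 h)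

theorem edge_step' (hws : gl.WellStructured) (hv : v ∈ gl.L)
    (hD : ∀ n, v ∈ (gl.P n).support ↔ D ≤ n) {z₁ z₂ : V} {d : ℕ} (hd : D < d)
    (he : s(z₁, z₂) ∈ (gl.P d).edges) (h1v : z₁ ≠ v) (h2v : z₂ ≠ v) (h1 : gl.Rgt v D z₁) :
    gl.Rgt v D z₂ := by
  have hz₁ : z₁ ∈ (gl.P d).support := (gl.P d).fst_mem_support_of_mem_edges he
  have hz₂ : z₂ ∈ (gl.P d).support := (gl.P d).snd_mem_support_of_mem_edges he
  have hvd : v ∈ (gl.P d).support := (hD d).mpr hd.le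
  have hnd : (gl.P d).support.Nodup := (gl.isPath d).support_nodup
  have hb1 : [v, z₁].Sublist (gl.P d).support := Rgt.before hws hv hD h1 h1v hd hz₁
  refine ⟨d, hd, hz₂, ?_⟩
  rcases before_total hnd hvd hz₂ (Ne.symm h2v) with h | h
  · exact h
  · exfalso
    exact no_mid' (gl.P d) (gl.isPath d) he h1v.symm h2v.symm (before_triple hnd h hb1)

theorem lft_of_le (hws : gl.WellStructured) (hv : v ∈ gl.L)
    (hD : ∀ n, v ∈ (gl.P n).support ↔ D ≤ n) {z : V} (hzL : z ∈ gl.L) (hle : gl.le z v)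
    (hzv : z ≠ v) : gl.Lft v D z := by
  obtain ⟨N, hN⟩ := (gl.gl1 z).mp hzL
  refine ⟨max N D + 1, by omega, (hN _).mpr (by omega), ?_⟩
  exact (gl.claim1 hws hv hD (d := max N D + 1) (by omega) hzL ((hN _).mpr (by omega)) hzv).mpr hle

theorem rgt_of_le (hws : gl.WellStructured) (hv : v ∈ gl.L)
    (hD : ∀ n, v ∈ (gl.P n).support ↔ D ≤ n) {z : V} (hzL : z ∈ gl.L) (hle : gl.le v z)
    (hzv : z ≠ v) : gl.Rgt v D z := by
  obtain ⟨N, hN⟩ := (gl.gl1 z).mp hzL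
  have hzd : z ∈ (gl.P (max N D + 1)).support := (hN _).mpr (by omega)
  have hvd : v ∈ (gl.P (max N D + 1)).support := (hD _).mpr (by omega)
  have hnd := (gl.isPath (max N D + 1)).support_nodup
  refine ⟨max N D + 1, by omega, hzd, ?_⟩
  rcases before_total hnd hvd hzd (Ne.symm hzv) with h | h
  · exact h
  · exfalso
    have := (gl.claim1 hws hv hD (d := max N D + 1) (by omega) hzL hzd hzv).mp h
    exact hzv (gl.le_antisymm z hzL v hv this hle)

/-- SEPARATION: a walk in `⋃P` avoiding `v` and containing a vertex on each side of `v`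
must use an edge of depth `≤ D`. -/
theorem sep (hws : gl.WellStructured) (hv : v ∈ gl.L)
    (hD : ∀ n, v ∈ (gl.P n).support ↔ D ≤ n) {s t : V} (W : gl.union.Walk s t)
    (hvW : v ∉ W.support) (hlow : ∀ e ∈ W.edges, ∀ m, m ≤ D → e ∉ (gl.P m).edges) :
    ∀ z₁ ∈ W.support, ∀ z₂ ∈ W.support, gl.Lft v D z₁ → gl.Rgt v D z₂ → False := by
  induction W with
  | nil =>
    intro z₁ hz₁ z₂ hz₂ h1 h2
    rw [Walk.support_nil, List.mem_singleton] at hz₁ hz₂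
    have e12 : z₁ = z₂ := hz₁.trans hz₂.symm
    have hzv : z₂ ≠ v := by
      intro e
      apply hvW
      rw [Walk.support_nil, List.mem_singleton, ← e]
      exact hz₂
    exact not_lft_rgt hws hv hD hzv (e12 ▸ h1) h2
  | cons h p ih =>
    rename_i a b c
    obtain ⟨n, hn⟩ := id h
    have hedge : s(a, b) ∈ (Walk.cons h p).edges := by
      rw [Walk.edges_cons]; exact List.mem_cons_self
    have hnD : D < n := by
      by_contra hc
      exact hlow _ hedge n (by omega) hn
    have hva : v ≠ a := by
      intro e; subst e; exact hvW (Walk.start_mem_support _)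
    have hvb : v ≠ b := by
      intro e; subst e
      exact hvW (by rw [Walk.support_cons]; exact List.mem_cons_of_mem _ p.start_mem_support)
    have hvp : v ∉ p.support := fun hh =>
      hvW (by rw [Walk.support_cons]; exact List.mem_cons_of_mem _ hh)
    have hlow' : ∀ e ∈ p.edges, ∀ m, m ≤ D → e ∉ (gl.P m).edges := fun e he =>
      hlow e (by rw [Walk.edges_cons]; exact List.mem_cons_of_mem _ he)
    intro z₁ hz₁ z₂ hz₂ h1 h2
    rw [Walk.support_cons, List.mem_cons] at hz₁ hz₂
    have h1' : ∃ z ∈ p.support, gl.Lft v D z := by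
      rcases hz₁ with rfl | hz₁
      · exact ⟨b, p.start_mem_support,
          edge_step hws hv hD hnD hn (Ne.symm hva) (Ne.symm hvb) h1⟩
      · exact ⟨z₁, hz₁, h1⟩
    have h2' : ∃ z ∈ p.support, gl.Rgt v D z := by
      rcases hz₂ with rfl | hz₂
      · exact ⟨b, p.start_mem_support,
          edge_step' hws hv hD hnD hn (Ne.symm hva) (Ne.symm hvb) h2⟩
      · exact ⟨z₂, hz₂, h2⟩
    obtain ⟨w₁, hw₁, hl1⟩ := h1'
    obtain ⟨w₂, hw₂, hl2⟩ := h2'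
    exact ih hvp hlow' w₁ hw₁ w₂ hw₂ hl1 hl2

end GrainLine

namespace GrainLine
open GLAux List SimpleGraph

variable {V : Type*} {G : SimpleGraph V} {x y : V}

theorem pigeonhole {G' : SimpleGraph V} {x' y' : V} (Q : ℕ → G'.Walk x' y')
    (hdisj : ∀ m n, m ≠ n → EdgeDisjW (Q m) (Q n)) (gl : GrainLine G x y) (N D : ℕ)
    (h : ∀ n, N ≤ n → ∃ e ∈ (Q n).edges, ∃ m ≤ D, e ∈ (gl.P m).edges) : False := by
  classical
  set F : ℕ → Sym2 V := fun n => if hn : N ≤ n then (h n hn).choose else s(x, x) with hF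
  have hF1 : ∀ n, N ≤ n → F n ∈ (Q n).edges := by
    intro n hn
    rw [hF]
    simp only [dif_pos hn]
    exact (h n hn).choose_spec.1
  have hF2 : ∀ n, N ≤ n → ∃ m ≤ D, F n ∈ (gl.P m).edges := by
    intro n hn
    rw [hF]
    simp only [dif_pos hn]
    exact (h n hn).choose_spec.2
  have hinj : Set.InjOn F (Set.Ici N) := by
    intro n₁ hn₁ n₂ hn₂ he
    by_contra hne
    exact hdisj n₁ n₂ hne (F n₁) (hF1 n₁ hn₁) (he ▸ hF1 n₂ hn₂)
  have hSfin : {e : Sym2 V | ∃ m ≤ D, e ∈ (gl.P m).edges}.Finite := by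
    have : {e : Sym2 V | ∃ m ≤ D, e ∈ (gl.P m).edges} =
        ⋃ m ∈ Set.Iic D, {e | e ∈ (gl.P m).edges} := by
      ext e
      simp [Set.mem_iUnion]
    rw [this]
    exact Set.Finite.biUnion (Set.finite_Iic D) (fun m _ => List.finite_toSet _)
  have himg : F '' Set.Ici N ⊆ {e : Sym2 V | ∃ m ≤ D, e ∈ (gl.P m).edges} := by
    rintro e ⟨n, hn, rfl⟩
    exact hF2 n hn
  have : (Set.Ici N).Finite := Set.Finite.of_finite_image (hSfin.subset himg) hinj
  exact Set.Ici_infinite N this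

theorem union_walk_mem (gl : GrainLine G x y) {s t z : V} (W : gl.union.Walk s t)
    (hst : s ≠ t) (hz : z ∈ W.support) :
    ∃ n e, e ∈ W.edges ∧ z ∈ e ∧ e ∈ (gl.P n).edges := by
  obtain ⟨e, he, hze⟩ := mem_edge_of_support W hst z hz
  have hE : e ∈ gl.union.edgeSet := W.edges_subset_edgeSet he
  induction e with
  | _ p q =>
    have hadj : gl.union.Adj p q := hE
    obtain ⟨n, hn⟩ := hadj
    exact ⟨n, s(p, q), he, hze, hn⟩

/-- PART 1: the limit set of the inner grain line is contained in `L`. -/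
theorem part1 (gl : GrainLine G x y) {x' y' : V} (gl' : GrainLine gl.union x' y') :
    gl'.L ⊆ gl.L := by
  intro v hvM
  by_contra hvL
  obtain ⟨N', hN'⟩ := (gl'.gl1 v).mp hvM
  have hQ : ∀ i : ℕ, v ∈ (gl'.P (N' + i)).support := fun i => (hN' _).mpr (by omega)
  obtain ⟨d₀, e₀, he₀, hze₀, heP₀⟩ := gl.union_walk_mem (gl'.P (N' + 0)) gl'.ne_xy (hQ 0)
  obtain ⟨d₁, e₁, he₁, hze₁, heP₁⟩ := gl.union_walk_mem (gl'.P (N' + 1)) gl'.ne_xy (hQ 1)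
  obtain ⟨d₂, e₂, he₂, hze₂, heP₂⟩ := gl.union_walk_mem (gl'.P (N' + 2)) gl'.ne_xy (hQ 2)
  have hvd₀ : v ∈ (gl.P d₀).support := mem_edge_support heP₀ hze₀
  have hvd₁ : v ∈ (gl.P d₁).support := mem_edge_support heP₁ hze₁
  have hvd₂ : v ∈ (gl.P d₂).support := mem_edge_support heP₂ hze₂
  have hd10 : d₁ = d₀ := by
    by_contra hne
    exact gl.gl2 d₀ v hvd₀ hvL d₁ hne hvd₁
  have hd20 : d₂ = d₀ := by
    by_contra hne
    exact gl.gl2 d₀ v hvd₀ hvL d₂ hne hvd₂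
  subst hd10; subst hd20
  have hdisj : ∀ i j : ℕ, i ≠ j → ∀ e, e ∈ (gl'.P (N' + i)).edges → e ∉ (gl'.P (N' + j)).edges :=
    fun i j hij => gl'.edgeDisj (N' + i) (N' + j) (by omega)
  have h01 : e₀ ≠ e₁ := fun e => hdisj 0 1 (by omega) e₀ he₀ (e ▸ he₁)
  have h02 : e₀ ≠ e₂ := fun e => hdisj 0 2 (by omega) e₀ he₀ (e ▸ he₂)
  have h12 : e₁ ≠ e₂ := fun e => hdisj 1 2 (by omega) e₁ he₁ (e ▸ he₂)
  exact three_edges (gl.P d₂) (gl.isPath d₂) v e₀ e₁ e₂ heP₀ heP₁ heP₂ h01 h02 h12 hze₀ hze₁ hze₂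

/-- PART 2: the limit set of the inner grain line is an interval of `L`. -/
theorem part2 [DecidableEq V] (gl : GrainLine G x y) (hws : gl.WellStructured) {x' y' : V}
    (gl' : GrainLine gl.union x' y') {u w v : V} (hu : u ∈ gl'.L) (hw : w ∈ gl'.L)
    (hv : v ∈ gl.L) (huv : gl.le u v) (hvw : gl.le v w) : v ∈ gl'.L := by
  by_cases hvu : v = u
  · exact hvu ▸ hu
  by_cases hvw' : v = w
  · exact hvw' ▸ hw
  by_contra hvM
  have huL : u ∈ gl.L := gl.part1 gl' hu
  have hwL : w ∈ gl.L := gl.part1 gl' hw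
  obtain ⟨D, hD⟩ := (gl.gl1 v).mp hv
  have hLft : gl.Lft v D u := lft_of_le hws hv hD huL huv (fun e => hvu e.symm)
  have hRgt : gl.Rgt v D w := rgt_of_le hws hv hD hwL hvw (fun e => hvw' e.symm)
  obtain ⟨Nu, hNu⟩ := (gl'.gl1 u).mp hu
  obtain ⟨Nw, hNw⟩ := (gl'.gl1 w).mp hw
  have hbig : ∃ N, ∀ n, N ≤ n →
      u ∈ (gl'.P n).support ∧ w ∈ (gl'.P n).support ∧ v ∉ (gl'.P n).support := by
    by_cases hex : ∃ n₁, v ∈ (gl'.P n₁).support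
    · obtain ⟨n₁, hn₁⟩ := hex
      refine ⟨max (max Nu Nw) (n₁ + 1), fun n hn => ⟨(hNu n).mpr (by omega),
        (hNw n).mpr (by omega), gl'.gl2 n₁ v hn₁ hvM n (by omega)⟩⟩
    · push_neg at hex
      exact ⟨max Nu Nw, fun n hn => ⟨(hNu n).mpr (by omega), (hNw n).mpr (by omega), hex n⟩⟩
  obtain ⟨N, hN⟩ := hbig
  refine pigeonhole gl'.P gl'.edgeDisj gl N D (fun n hn => ?_)
  obtain ⟨hun, hwn, hvn⟩ := hN n hn
  by_contra hno
  push_neg at hno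
  exact sep hws hv hD (gl'.P n) hvn hno u hun w hwn hLft hRgt

/-- betweenness transfer -/
theorem btw [DecidableEq V] (gl : GrainLine G x y) (hws : gl.WellStructured) {x' y' : V}
    (gl' : GrainLine gl.union x' y') {a b c : V} (ha : a ∈ gl'.L) (hb : b ∈ gl'.L)
    (hc : c ∈ gl'.L) (hab : a ≠ b) (hbc : b ≠ c) (hac : a ≠ c) (h1 : gl.le a b)
    (h2 : gl.le b c) : (gl'.le a b ∧ gl'.le b c) ∨ (gl'.le c b ∧ gl'.le b a) := by
  have haL : a ∈ gl.L := gl.part1 gl' ha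
  have hbL : b ∈ gl.L := gl.part1 gl' hb
  have hcL : c ∈ gl.L := gl.part1 gl' hc
  obtain ⟨D, hD⟩ := (gl.gl1 b).mp hbL
  have hLft : gl.Lft b D a := lft_of_le hws hbL hD haL h1 hab
  have hRgt : gl.Rgt b D c := rgt_of_le hws hbL hD hcL h2 (Ne.symm hbc)
  obtain ⟨Na, hNa⟩ := (gl'.gl1 a).mp ha
  obtain ⟨Nb, hNb⟩ := (gl'.gl1 b).mp hb
  obtain ⟨Nc, hNc⟩ := (gl'.gl1 c).mp hc
  set N := max (max Na Nc) Nb with hNdef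
  have haLlt : ∀ n, N + 1 ≤ n → a ∈ gl'.Llt n :=
    fun n hn => ⟨ha, N, by omega, (hNa N).mpr (by omega)⟩
  have hbLlt : ∀ n, N + 1 ≤ n → b ∈ gl'.Llt n :=
    fun n hn => ⟨hb, N, by omega, (hNb N).mpr (by omega)⟩
  have hcLlt : ∀ n, N + 1 ≤ n → c ∈ gl'.Llt n :=
    fun n hn => ⟨hc, N, by omega, (hNc N).mpr (by omega)⟩
  have key : (gl'.le b a ∧ gl'.le b c) ∨ (gl'.le a b ∧ gl'.le c b) → ∀ n, N + 1 ≤ n →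
      ∃ e ∈ (gl'.P n).edges, ∃ m ≤ D, e ∈ (gl.P m).edges := by
    intro hcase n hn
    have h1n : 1 ≤ n := by omega
    by_contra hno
    push_neg at hno
    have hsep : ∀ {p q : V} (W' : gl.union.Walk p q),
        (∀ e ∈ W'.edges, e ∈ (gl'.P n).edges) → b ∉ W'.support → a ∈ W'.support →
        c ∈ W'.support → False := by
      intro p q W' hWe hbW' haW' hcW'
      exact sep hws hbL hD W' hbW' (fun e he m hm => hno e (hWe e he) m hm) a haW'
        c hcW' hLft hRgt
    rcases hcase with ⟨h3, h4⟩ | ⟨h3, h4⟩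
    · -- b is the minimum of the triple in ≤'
      have hba : [b, a].Sublist (gl'.P n).support :=
        (gl'.gl3' h1n (hbLlt n hn) (haLlt n hn) (Ne.symm hab)).mp h3
      have hbc2 : [b, c].Sublist (gl'.P n).support :=
        (gl'.gl3' h1n (hbLlt n hn) (hcLlt n hn) hbc).mp h4
      rcases gl'.le_total a ha c hc with h5 | h5
      · have hacB : [a, c].Sublist (gl'.P n).support :=
          (gl'.gl3' h1n (haLlt n hn) (hcLlt n hn) hac).mp h5
        obtain ⟨W', hWe, hbW'⟩ := ext_walk (gl'.P n) (gl'.isPath n) hacB (Ne.symm hab) hbc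
          (Or.inr (Or.inl hba))
        exact hsep W' hWe hbW' W'.start_mem_support W'.end_mem_support
      · have hcaB : [c, a].Sublist (gl'.P n).support :=
          (gl'.gl3' h1n (hcLlt n hn) (haLlt n hn) (Ne.symm hac)).mp h5
        obtain ⟨W', hWe, hbW'⟩ := ext_walk (gl'.P n) (gl'.isPath n) hcaB hbc (Ne.symm hab)
          (Or.inr (Or.inl hbc2))
        exact hsep W' hWe hbW' W'.end_mem_support W'.start_mem_support
    · -- b is the maximum of the triple in ≤'
      have hab2 : [a, b].Sublist (gl'.P n).support :=
        (gl'.gl3' h1n (haLlt n hn) (hbLlt n hn) hab).mp h3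
      have hcb : [c, b].Sublist (gl'.P n).support :=
        (gl'.gl3' h1n (hcLlt n hn) (hbLlt n hn) (Ne.symm hbc)).mp h4
      rcases gl'.le_total a ha c hc with h5 | h5
      · have hacB : [a, c].Sublist (gl'.P n).support :=
          (gl'.gl3' h1n (haLlt n hn) (hcLlt n hn) hac).mp h5
        obtain ⟨W', hWe, hbW'⟩ := ext_walk (gl'.P n) (gl'.isPath n) hacB (Ne.symm hab) hbc
          (Or.inr (Or.inr hcb))
        exact hsep W' hWe hbW' W'.start_mem_support W'.end_mem_support
      · have hcaB : [c, a].Sublist (gl'.P n).support :=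
          (gl'.gl3' h1n (hcLlt n hn) (haLlt n hn) (Ne.symm hac)).mp h5
        obtain ⟨W', hWe, hbW'⟩ := ext_walk (gl'.P n) (gl'.isPath n) hcaB hbc (Ne.symm hab)
          (Or.inr (Or.inr hab2))
        exact hsep W' hWe hbW' W'.end_mem_support W'.start_mem_support
  rcases gl'.le_total a ha b hb with h3 | h3
  · rcases gl'.le_total b hb c hc with h4 | h4
    · exact Or.inl ⟨h3, h4⟩
    · exact absurd (pigeonhole gl'.P gl'.edgeDisj gl (N + 1) D
        (key (Or.inr ⟨h3, h4⟩))) not_false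
  · rcases gl'.le_total b hb c hc with h4 | h4
    · exact absurd (pigeonhole gl'.P gl'.edgeDisj gl (N + 1) D
        (key (Or.inl ⟨h3, h4⟩))) not_false
    · exact Or.inr ⟨h4, h3⟩

end GrainLine

/-- a grain line inside the graph defined by a well-structured
grain line has its limit set an interval of `L`, ordered by `≤_L` or its
reverse. -/
theorem grainline_in_wellStructured_is_interval {V : Type*} {G : SimpleGraph V}
    {x y x' y' : V} (gl : GrainLine G x y) (hws : gl.WellStructured)
    (gl' : GrainLine gl.union x' y') :
    gl'.L ⊆ gl.L ∧
    (∀ u ∈ gl'.L, ∀ w ∈ gl'.L, ∀ v ∈ gl.L, gl.le u v → gl.le v w → v ∈ gl'.L) ∧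
    ((∀ u ∈ gl'.L, ∀ v ∈ gl'.L, (gl'.le u v ↔ gl.le u v)) ∨
     (∀ u ∈ gl'.L, ∀ v ∈ gl'.L, (gl'.le u v ↔ gl.le v u))) := by

  classical
  have hsub : gl'.L ⊆ gl.L := gl.part1 gl'
  refine ⟨hsub, fun u hu w hw v hv huv hvw => gl.part2 hws gl' hu hw hv huv hvw, ?_⟩
  have hx' : x' ∈ gl'.L := gl'.x_mem
  have hy' : y' ∈ gl'.L := gl'.y_mem
  have hx'L : x' ∈ gl.L := hsub hx'
  have hy'L : y' ∈ gl.L := hsub hy'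
  have hne : x' ≠ y' := gl'.ne_xy
  rcases gl.le_total x' hx'L y' hy'L with hxy | hxy
  · left
    have hminL : ∀ u ∈ gl'.L, gl.le x' u := by
      intro u hu
      by_contra hc
      have huL := hsub hu
      have hux : u ≠ x' := by rintro rfl; exact hc (gl.le_refl _ hx'L)
      have hle : gl.le u x' := by
        rcases gl.le_total u huL x' hx'L with h | h
        · exact h
        · exact absurd h hc
      have huy : u ≠ y' := by
        rintro rfl
        exact hne (gl.le_antisymm _ hx'L _ hy'L hxy hle)
      rcases gl.btw hws gl' hu hx' hy' hux hne huy hle hxy with ⟨hA, hB⟩ | ⟨hA, hB⟩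
      · exact hux (gl'.le_antisymm u hu x' hx' hA (gl'.x_min u hu))
      · exact hne (gl'.le_antisymm x' hx' y' hy' (gl'.x_min y' hy') hA)
    have hmaxL : ∀ u ∈ gl'.L, gl.le u y' := by
      intro u hu
      by_contra hc
      have huL := hsub hu
      have huy : u ≠ y' := by rintro rfl; exact hc (gl.le_refl _ hy'L)
      have hle : gl.le y' u := by
        rcases gl.le_total u huL y' hy'L with h | h
        · exact absurd h hc
        · exact h
      have hux : u ≠ x' := by
        rintro rfl
        exact hne (gl.le_antisymm _ hx'L _ hy'L hxy hle)
      rcases gl.btw hws gl' hx' hy' hu hne (Ne.symm huy) (Ne.symm hux) hxy hle with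
        ⟨hA, hB⟩ | ⟨hA, hB⟩
      · exact huy (gl'.le_antisymm u hu y' hy' (gl'.y_max u hu) hB)
      · exact hne (gl'.le_antisymm x' hx' y' hy' (gl'.x_min y' hy') hB)
    have hmono : ∀ u ∈ gl'.L, ∀ v ∈ gl'.L, u ≠ v → gl.le u v → gl'.le u v := by
      intro u hu v hv huv hle
      by_cases hux : u = x'
      · subst hux; exact gl'.x_min v hv
      · have hvx : v ≠ x' := by
          rintro rfl
          exact hux (gl.le_antisymm _ (hsub hu) _ hx'L hle (hminL u hu))
        rcases gl.btw hws gl' hx' hu hv (Ne.symm hux) huv (Ne.symm hvx) (hminL u hu) hle with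
          ⟨hA, hB⟩ | ⟨hA, hB⟩
        · exact hB
        · exact absurd (gl'.le_antisymm u hu x' hx' hB (gl'.x_min u hu)) hux
    intro u hu v hv
    constructor
    · intro hle'
      by_cases huv : u = v
      · subst huv; exact gl.le_refl u (hsub hu)
      · rcases gl.le_total u (hsub hu) v (hsub hv) with h | h
        · exact h
        · exact absurd (gl'.le_antisymm u hu v hv hle' (hmono v hv u hu (Ne.symm huv) h)) huv
    · intro hle
      by_cases huv : u = v
      · subst huv; exact gl'.le_refl u hu
      · exact hmono u hu v hv huv hle
  · right
    have hmaxL : ∀ u ∈ gl'.L, gl.le u x' := by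
      intro u hu
      by_contra hc
      have huL := hsub hu
      have hux : u ≠ x' := by rintro rfl; exact hc (gl.le_refl _ hx'L)
      have hle : gl.le x' u := by
        rcases gl.le_total u huL x' hx'L with h | h
        · exact absurd h hc
        · exact h
      have huy : u ≠ y' := by
        rintro rfl
        exact hne (gl.le_antisymm _ hx'L _ hy'L hle hxy)
      rcases gl.btw hws gl' hy' hx' hu (Ne.symm hne) (Ne.symm hux) (Ne.symm huy) hxy hle with
        ⟨hA, hB⟩ | ⟨hA, hB⟩
      · exact hne (gl'.le_antisymm x' hx' y' hy' (gl'.x_min y' hy') hA)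
      · exact hux (gl'.le_antisymm u hu x' hx' hA (gl'.x_min u hu))
    have hminL : ∀ u ∈ gl'.L, gl.le y' u := by
      intro u hu
      by_contra hc
      have huL := hsub hu
      have huy : u ≠ y' := by rintro rfl; exact hc (gl.le_refl _ hy'L)
      have hle : gl.le u y' := by
        rcases gl.le_total u huL y' hy'L with h | h
        · exact h
        · exact absurd h hc
      have hux : u ≠ x' := by
        rintro rfl
        exact hne (gl.le_antisymm _ hx'L _ hy'L hle hxy)
      rcases gl.btw hws gl' hu hy' hx' huy (Ne.symm hne) hux hle hxy with ⟨hA, hB⟩ | ⟨hA, hB⟩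
      · exact hne (gl'.le_antisymm x' hx' y' hy' (gl'.x_min y' hy') hB)
      · exact huy (gl'.le_antisymm u hu y' hy' (gl'.y_max u hu) hB)
    have hmono : ∀ u ∈ gl'.L, ∀ v ∈ gl'.L, u ≠ v → gl.le u v → gl'.le v u := by
      intro u hu v hv huv hle
      by_cases hvx : v = x'
      · subst hvx; exact gl'.x_min u hu
      · have hux : u ≠ x' := by
          rintro rfl
          exact hvx (gl.le_antisymm _ (hsub hv) _ hx'L (hmaxL v hv) hle)
        rcases gl.btw hws gl' hu hv hx' huv hvx hux hle (hmaxL v hv) with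
          ⟨hA, hB⟩ | ⟨hA, hB⟩
        · exact absurd (gl'.le_antisymm v hv x' hx' hB (gl'.x_min v hv)) hvx
        · exact hB
    intro u hu v hv
    constructor
    · intro hle'
      by_cases huv : u = v
      · subst huv; exact gl.le_refl u (hsub hu)
      · rcases gl.le_total v (hsub hv) u (hsub hu) with h | h
        · exact h
        · exact absurd (gl'.le_antisymm u hu v hv hle' (hmono u hu v hv huv h)) huv
    · intro hle
      by_cases huv : u = v
      · subst huv; exact gl'.le_refl u hu
      · exact hmono v hv u hu (Ne.symm huv) hle
end

section
/- Let ((L,≤_L),(P_n)_{n∈ℕ}) be a free and well-structured grain line and let ((M,≤_M),(Q_n)_{n∈ℕ}) be a grain line in the graph ⋃P defined by ((L,≤_L),(P_n)). Then only finitely many vertices of ⋃Q := ⋃_{n∈ℕ} Q_n lie outside of M; in particular, there is a number d ∈ ℕ such that ⋃_{n≥d} Q_n is infinitely edge-connected, i.e. the grain line ((M,≤_M),(Q_n)_{n≥d}) (reindexed over ℕ) is free. -/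
open SimpleGraph

/-! ### Auxiliary lemmas for Statement 6 -/

section AuxWalk

open SimpleGraph Walk

variable {V : Type*} {G : SimpleGraph V}

lemma aux_walk_support_edge {u v : V} (p : G.Walk u v) :
    ∀ z ∈ p.support, z = u ∨ ∃ c, s(z, c) ∈ p.edges := by
  induction p with
  | nil => intro z hz; simp only [Walk.support_nil, List.mem_singleton] at hz; exact Or.inl hz
  | @cons ua ub uc h q ih =>
    intro z hz
    rw [Walk.support_cons] at hz
    rcases List.mem_cons.mp hz with rfl | hz
    · exact Or.inl rfl
    · rcases ih z hz with rfl | ⟨cc, hc⟩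
      · refine Or.inr ⟨ua, ?_⟩
        rw [Sym2.eq_swap]
        simp
      · exact Or.inr ⟨cc, by simp [hc]⟩

lemma aux_exists_first_edge {u v : V} (p : G.Walk u v) (h : u ≠ v) :
    ∃ z, s(u, z) ∈ p.edges := by
  cases p with
  | nil => exact absurd rfl h
  | @cons ua ub uc h' q => exact ⟨ub, by simp⟩

lemma aux_support_edge_of_ne {u v : V} (p : G.Walk u v) (h : u ≠ v) :
    ∀ z ∈ p.support, ∃ c, s(z, c) ∈ p.edges := by
  intro z hz
  rcases aux_walk_support_edge p z hz with rfl | hc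
  · exact aux_exists_first_edge p h
  · exact hc

lemma aux_path_start_nbr {u v a b : V} {p : G.Walk u v} (hp : p.IsPath)
    (ha : s(u, a) ∈ p.edges) (hb : s(u, b) ∈ p.edges) : a = b := by
  cases p with
  | nil => simp at ha
  | @cons u w v h q =>
    rw [Walk.edges_cons, List.mem_cons] at ha hb
    have hq := (Walk.cons_isPath_iff _ _ |>.mp hp).2
    rcases ha with ha | ha
    · rcases hb with hb | hb
      · have h1 : a = w := by
          rcases Sym2.eq_iff.mp ha with ⟨-, h1⟩ | ⟨h1, h2⟩
          · exact h1
          · exact h2 ▸ h1.symm ▸ rfl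
        have h2 : b = w := by
          rcases Sym2.eq_iff.mp hb with ⟨-, h1⟩ | ⟨h1, h2⟩
          · exact h1
          · exact h2 ▸ h1.symm ▸ rfl
        rw [h1, h2]
      · exact absurd (q.fst_mem_support_of_mem_edges hb) hq
    · exact absurd (q.fst_mem_support_of_mem_edges ha) hq

lemma aux_path_nbr_three {u v : V} {p : G.Walk u v} (hp : p.IsPath) {z a b c : V}
    (ha : s(z, a) ∈ p.edges) (hb : s(z, b) ∈ p.edges) (hc : s(z, c) ∈ p.edges) :
    a = b ∨ a = c ∨ b = c := by
  induction p with
  | nil => simp at ha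
  | @cons u w v h q ih =>
    have hpq : q.IsPath := (Walk.cons_isPath_iff _ _ |>.mp hp).1
    have hns : u ∉ q.support := (Walk.cons_isPath_iff _ _ |>.mp hp).2
    rw [Walk.edges_cons, List.mem_cons] at ha hb hc
    by_cases hz : z = u
    · subst hz
      have key : ∀ {x : V}, s(z, x) = s(z, w) ∨ s(z, x) ∈ q.edges → x = w := by
        rintro x (hx | hx)
        · rcases Sym2.eq_iff.mp hx with ⟨-, h1⟩ | ⟨h1, h2⟩
          · exact h1
          · exact h2 ▸ h1.symm ▸ rfl
        · exact absurd (q.fst_mem_support_of_mem_edges hx) hns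
      rw [key ha, key hb]
      exact Or.inl rfl
    · have key : ∀ {x : V}, s(z, x) = s(u, w) → z = w ∧ x = u := by
        intro x hx
        rcases Sym2.eq_iff.mp hx with ⟨h1, -⟩ | ⟨h1, h2⟩
        · exact absurd h1 hz
        · exact ⟨h1, h2⟩
      rcases ha with ha | ha <;> rcases hb with hb | hb <;> rcases hc with hc | hc
      · exact Or.inl ((key ha).2.trans (key hb).2.symm)
      · exact Or.inl ((key ha).2.trans (key hb).2.symm)
      · exact Or.inr (Or.inl ((key ha).2.trans (key hc).2.symm))
      · -- ha head, hb hc in q : z = w = q start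
        obtain ⟨rfl, -⟩ := key ha
        exact Or.inr (Or.inr (aux_path_start_nbr hpq hb hc))
      · exact Or.inr (Or.inr ((key hb).2.trans (key hc).2.symm))
      · obtain ⟨rfl, -⟩ := key hb
        exact Or.inr (Or.inl (aux_path_start_nbr hpq ha hc))
      · obtain ⟨rfl, -⟩ := key hc
        exact Or.inl (aux_path_start_nbr hpq ha hb)
      · exact ih hpq ha hb hc

lemma aux_edge_mem_support_decomp {u v a c : V} {p : G.Walk u v} (h : s(a, c) ∈ p.edges) :
    ∃ l₁ l₂, p.support = l₁ ++ a :: c :: l₂ ∨ p.support = l₁ ++ c :: a :: l₂ := by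
  induction p with
  | nil => simp at h
  | @cons u w v hadj q ih =>
    rw [Walk.edges_cons, List.mem_cons] at h
    rcases h with h | h
    · refine ⟨[], q.support.tail, ?_⟩
      have hsup : (Walk.cons hadj q).support = u :: w :: q.support.tail := by
        rw [Walk.support_cons]
        exact congrArg (u :: ·) q.support_eq_cons
      rcases Sym2.eq_iff.mp h with ⟨rfl, rfl⟩ | ⟨rfl, rfl⟩
      · exact Or.inl hsup
      · exact Or.inr hsup
    · obtain ⟨l₁', l₂', h'⟩ := ih h
      refine ⟨u :: l₁', l₂', ?_⟩
      rcases h' with h' | h'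
      · exact Or.inl (by rw [Walk.support_cons, h']; rfl)
      · exact Or.inr (by rw [Walk.support_cons, h']; rfl)

lemma aux_exists_subpath_between {s t u v : V} {p : G.Walk s t} (hp : p.IsPath)
    (hu : u ∈ p.support) (hv : v ∈ p.support) :
    ∃ q : G.Walk u v, q.IsPath ∧ ∀ e ∈ q.edges, e ∈ p.edges := by
  classical
  by_cases hv2 : v ∈ (p.dropUntil u hu).support
  · exact ⟨(p.dropUntil u hu).takeUntil v hv2,
      (hp.dropUntil hu).takeUntil hv2,
      fun e he => p.edges_dropUntil_subset hu
        ((p.dropUntil u hu).edges_takeUntil_subset hv2 he)⟩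
  · have hv1 : v ∈ (p.takeUntil u hu).support := by
      have hspec := p.take_spec hu
      have := hv
      rw [← hspec, Walk.mem_support_append_iff] at this
      exact this.resolve_right hv2
    refine ⟨((p.takeUntil u hu).dropUntil v hv1).reverse,
      ((hp.takeUntil hu).dropUntil hv1).reverse, ?_⟩
    intro e he
    rw [Walk.edges_reverse, List.mem_reverse] at he
    exact p.edges_takeUntil_subset hu
      ((p.takeUntil u hu).edges_dropUntil_subset hv1 he)

/-- Discrete intermediate value theorem for walks. -/
lemma aux_walk_cross {H : SimpleGraph V} {below above : V → Prop} :
    ∀ {s t : V} (W : H.Walk s t), (∀ z ∈ W.support, below z ∨ above z) →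
    below s → ¬ below t →
    ∃ α γ, s(α, γ) ∈ W.edges ∧ below α ∧ above γ := by
  intro s t W
  induction W with
  | nil => intro _ hs ht; exact absurd hs ht
  | @cons s u t h q ih =>
    intro htot hs ht
    by_cases hu : below u
    · obtain ⟨α, γ, hmem, hα, hγ⟩ := ih (fun z hz => htot z (by simp [hz])) hu ht
      exact ⟨α, γ, by simp [hmem], hα, hγ⟩
    · exact ⟨s, u, by simp, hs, (htot u (by simp)).resolve_left hu⟩

/-- An excursion of a path beyond `b` (with respect to an abstract order `r`)
produces an edge strictly straddling `b`. -/
lemma aux_excursion_edge {L : Set V} {r : V → V → Prop}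
    (hrefl : ∀ z ∈ L, r z z) (hanti : ∀ p ∈ L, ∀ q ∈ L, r p q → r q p → p = q)
    (htot : ∀ p ∈ L, ∀ q ∈ L, r p q ∨ r q p)
    {H : SimpleGraph V} {s t b v₀ : V} {W : H.Walk s t} (hW : W.IsPath)
    (hsupL : ∀ z ∈ W.support, z ∈ L) (hbL : b ∈ L)
    (hs : r s b) (ht : r t b) (hv₀ : v₀ ∈ W.support) (hbv : r b v₀) (hbvne : b ≠ v₀) :
    ∃ α γ, s(α, γ) ∈ W.edges ∧ r γ b ∧ γ ≠ b ∧ r b α ∧ α ≠ b := by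
  classical
  set W1 := W.takeUntil v₀ hv₀ with hW1
  set W2 := W.dropUntil v₀ hv₀ with hW2
  have hsup1 : ∀ z ∈ W1.support, z ∈ L :=
    fun z hz => hsupL z (W.support_takeUntil_subset hv₀ hz)
  have hsup2 : ∀ z ∈ W2.support, z ∈ L :=
    fun z hz => hsupL z (W.support_dropUntil_subset hv₀ hz)
  have htot' : ∀ (Wa : H.Walk v₀ s) (_ : ∀ z ∈ Wa.support, z ∈ L),
      ∀ z ∈ Wa.support, (r b z ∧ b ≠ z) ∨ r z b := by
    intro Wa hWa z hz
    rcases htot z (hWa z hz) b hbL with h | h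
    · exact Or.inr h
    · by_cases hzb : b = z
      · exact Or.inr (hzb ▸ hrefl b hbL)
      · exact Or.inl ⟨h, hzb⟩
  have hcross : ∀ {s' : V} (Wa : H.Walk v₀ s') (_ : ∀ z ∈ Wa.support, z ∈ L)
      (_ : r s' b),
      ∃ α γ, s(α, γ) ∈ Wa.edges ∧ (r b α ∧ b ≠ α) ∧ r γ b := by
    intro s' Wa hWa hs'
    refine aux_walk_cross (below := fun z => r b z ∧ b ≠ z) (above := fun z => r z b)
      Wa ?_ ?_ ?_
    · intro z hz
      rcases htot z (hWa z hz) b hbL with h | h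
      · exact Or.inr h
      · by_cases hzb : b = z
        · exact Or.inr (hzb ▸ hrefl b hbL)
        · exact Or.inl ⟨h, hzb⟩
    · exact ⟨hbv, hbvne⟩
    · rintro ⟨h1, h2⟩
      exact h2 (hanti b hbL s' (hWa s' Wa.end_mem_support) h1 hs')
  obtain ⟨α₁, γ₁, he₁, hα₁, hγ₁⟩ := hcross W1.reverse
    (fun z hz => hsup1 z (by rwa [Walk.support_reverse, List.mem_reverse] at hz)) hs
  obtain ⟨α₂, γ₂, he₂, hα₂, hγ₂⟩ := hcross W2 hsup2 ht
  have he₁' : s(α₁, γ₁) ∈ W1.edges := by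
    rwa [Walk.edges_reverse, List.mem_reverse] at he₁
  by_cases h1 : γ₁ = b
  · by_cases h2 : γ₂ = b
    · -- b appears in both W1 and the tail of W2 : contradiction with nodup
      exfalso
      have hb1 : b ∈ W1.support := h1 ▸ W1.snd_mem_support_of_mem_edges he₁'
      have hb2 : b ∈ W2.support := h2 ▸ W2.snd_mem_support_of_mem_edges he₂
      have hb2' : b ∈ W2.support.tail := by
        have := W2.support_eq_cons
        rw [this] at hb2
        exact (List.mem_cons.mp hb2).resolve_left hbvne
      have hnd : (W1.support ++ W2.support.tail).Nodup := by
        rw [← Walk.support_append, Walk.take_spec]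
        exact hW.support_nodup
      exact (List.nodup_append'.mp hnd).2.2 hb1 hb2'
    · exact ⟨α₂, γ₂, W.edges_dropUntil_subset hv₀ he₂, hγ₂, h2, hα₂.1, fun h => hα₂.2 h.symm⟩
  · exact ⟨α₁, γ₁, W.edges_takeUntil_subset hv₀ he₁', hγ₁, h1, hα₁.1, fun h => hα₁.2 h.symm⟩

end AuxWalk

section AuxGrain

open SimpleGraph Walk

variable {V : Type*} {G : SimpleGraph V} {x y : V}

/-- Freeness implies that every vertex of `⋃𝒫` lies in `L`. -/
lemma aux_supp_subset_L (gl : GrainLine G x y) (hfree : gl.Free) : gl.supp ⊆ gl.L := by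
  intro v hv
  by_contra hvL
  obtain ⟨n, hn⟩ := hv
  have hvx : v ≠ x := fun h => hvL (h ▸ gl.x_mem)
  have hx : x ∈ gl.supp := ⟨0, (gl.P 0).start_mem_support⟩
  obtain ⟨W, hWp, hWd⟩ := hfree.2 v ⟨n, hn⟩ x hx hvx
  have hz : ∀ k : ℕ, ∃ z, s(v, z) ∈ (W k).edges := fun k => aux_exists_first_edge (W k) hvx
  choose z hzmem using hz
  have hPn : ∀ k, s(v, z k) ∈ (gl.P n).edges := by
    intro k
    have hadj : gl.union.Adj v (z k) := (W k).adj_of_mem_edges (hzmem k)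
    obtain ⟨m, hm⟩ : ∃ m, s(v, z k) ∈ (gl.P m).edges := hadj
    have hvs : v ∈ (gl.P m).support := (gl.P m).fst_mem_support_of_mem_edges hm
    rcases eq_or_ne m n with rfl | hmn
    · exact hm
    · exact absurd hvs (gl.gl2 n v hn hvL m hmn)
  have hdist : ∀ j k : ℕ, j ≠ k → z j ≠ z k := by
    intro j k hjk he
    exact hWd j k hjk _ (hzmem j) (he ▸ hzmem k)
  rcases aux_path_nbr_three (gl.isPath n) (hPn 0) (hPn 1) (hPn 2) with h | h | h
  · exact hdist 0 1 (by norm_num) h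
  · exact hdist 0 2 (by norm_num) h
  · exact hdist 1 2 (by norm_num) h

/-- Members of `L_{<e}` lie on `P n` for all `n ≥` their depth; in particular on `P e`. -/
lemma aux_Llt_mem_support (gl : GrainLine G x y) {z : V} {e : ℕ} (hz : z ∈ gl.Llt e)
    {n : ℕ} (hn : e ≤ n) : z ∈ (gl.P n).support := by
  obtain ⟨hzL, m, hm, hms⟩ := hz
  obtain ⟨N, hN⟩ := (gl.gl1 z).1 hzL
  exact (hN n).2 (le_trans (le_trans ((hN m).1 hms) (le_of_lt hm)) hn)

/-- Finding the 𝒫-segment containing a given edge of `P e`, together with the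
interval bounds for the two ends of the edge (via well-structuredness). -/
lemma aux_seg_interval (gl : GrainLine G x y) (hws : gl.WellStructured)
    {e : ℕ} (he1 : 1 ≤ e) {l₁ l₂ : List V} {a₁ c₁ : V}
    (hdec : (gl.P e).support = l₁ ++ a₁ :: c₁ :: l₂)
    (ha₁ : a₁ ∈ gl.L) (hc₁ : c₁ ∈ gl.L) :
    ∃ u v, gl.IsSegEnds e u v ∧
      (gl.le u a₁ ∧ gl.le a₁ v) ∧ (gl.le u c₁ ∧ gl.le c₁ v) := by
  classical
  set l := (gl.P e).support with hl
  have hnodup : l.Nodup := (gl.isPath e).support_nodup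
  set A := l₁ ++ [a₁] with hA
  set B := c₁ :: l₂ with hB
  have hAB : l = A ++ B := by rw [hdec, hA]; simp
  have hxT : x ∈ gl.Llt e := ⟨gl.x_mem, 0, he1, (gl.P 0).start_mem_support⟩
  have hyT : y ∈ gl.Llt e := ⟨gl.y_mem, 0, he1, (gl.P 0).end_mem_support⟩
  have hmem_l : ∀ z ∈ gl.Llt e, z ∈ l := fun z hz => aux_Llt_mem_support gl hz le_rfl
  have hAne : A ≠ [] := by simp [hA]
  have hxA : x ∈ A := by
    obtain ⟨a0, A', hA'⟩ := List.exists_cons_of_ne_nil hAne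
    have h1 : l = x :: l.tail := (gl.P e).support_eq_cons
    have h2 : l = a0 :: (A' ++ B) := by rw [hAB, hA']; rfl
    have : x = a0 := by rw [h1] at h2; exact (List.cons.injEq _ _ _ _ ▸ h2).1
    rw [hA', this]; exact List.mem_cons_self
  have hBne : B ≠ [] := by simp [hB]
  have hyB : y ∈ B := by
    have h0 : l ≠ [] := by
      rw [hAB]
      exact fun hcon => hBne (List.append_eq_nil_iff.mp hcon).2
    have h1 : l.getLast? = some y := by
      rw [List.getLast?_eq_getLast_of_ne_nil h0]
      exact congrArg some ((gl.P e).getLast_support)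
    have h2 : l.getLast? = some (B.getLast hBne) := by
      rw [hAB, List.getLast?_append_of_ne_nil _ hBne]
      exact List.getLast?_eq_getLast_of_ne_nil hBne
    have h3 : y = B.getLast hBne := by
      rw [h1] at h2
      exact Option.some_injective _ h2
    exact h3 ▸ List.getLast_mem hBne
  set pT : V → Bool := fun z => decide (z ∈ gl.Llt e) with hpT
  set fA := A.filter pT with hfA
  set fB := B.filter pT with hfB
  have hfAne : fA ≠ [] :=
    List.ne_nil_of_mem (List.mem_filter.mpr ⟨hxA, by simp [hpT, hxT]⟩)
  have hfBne : fB ≠ [] :=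
    List.ne_nil_of_mem (List.mem_filter.mpr ⟨hyB, by simp [hpT, hyT]⟩)
  set u := fA.getLast hfAne with hu
  set v := fB.head hfBne with hv
  have huf : u ∈ fA := List.getLast_mem _
  have hvf : v ∈ fB := List.head_mem _
  have huT : u ∈ gl.Llt e := by have := List.mem_filter.mp huf; simpa [hpT] using this.2
  have hvT : v ∈ gl.Llt e := by have := List.mem_filter.mp hvf; simpa [hpT] using this.2
  have huA : u ∈ A := (List.mem_filter.mp huf).1
  have hvB : v ∈ B := (List.mem_filter.mp hvf).1
  have hnd := List.nodup_append'.mp (hAB ▸ hnodup)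
  have hdisj := hnd.2.2
  have hune : u ≠ v := fun h => hdisj huA (h ▸ hvB)
  -- order facts from GL3
  have hord : ∀ {p q : V}, p ∈ gl.Llt e → q ∈ gl.Llt e → p ≠ q →
      (gl.le p q ↔ Before l p q) := by
    intro p q hp hq hpq
    exact gl.gl3 e he1 p q hp.1 hq.1 hp.2 hq.2 hpq
  have hBefore_uv : Before l u v := by
    rw [hAB]
    exact List.Sublist.append (List.singleton_sublist.mpr huA)
      (List.singleton_sublist.mpr hvB)
  have hulev : gl.le u v := (hord huT hvT hune).mpr hBefore_uv
  -- consecutiveness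
  have hcons : ∀ z ∈ gl.Llt e, gl.le u z → gl.le z v → z = u ∨ z = v := by
    intro z hzT huz hzv
    by_contra hcon
    push_neg at hcon
    obtain ⟨hzu, hzvne⟩ := hcon
    have hzl : z ∈ l := hmem_l z hzT
    rcases List.mem_append.mp (hAB ▸ hzl) with hzA | hzB
    · -- z is in A, hence z precedes u in fA
      have hzf : z ∈ fA := List.mem_filter.mpr ⟨hzA, by simp [hpT, hzT]⟩
      have hdl : fA.dropLast ++ [u] = fA := List.dropLast_append_getLast hfAne
      have hzdl : z ∈ fA.dropLast := by
        rcases List.mem_append.mp (hdl ▸ hzf) with h | h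
        · exact h
        · exact absurd (List.mem_singleton.mp h) hzu
      have hsub : Before l z u := by
        have h1 : [z, u].Sublist (fA.dropLast ++ [u]) :=
          List.Sublist.append (List.singleton_sublist.mpr hzdl) (List.Sublist.refl _)
        have h1' : [z, u].Sublist fA := hdl ▸ h1
        have h2 : fA.Sublist A := List.filter_sublist
        have h3 : A.Sublist l := by rw [hAB]; exact List.sublist_append_left _ _
        exact (h1'.trans h2).trans h3
      have : gl.le z u := (hord hzT huT hzu).mpr hsub
      exact hzu (gl.le_antisymm z hzT.1 u huT.1 this huz ▸ rfl)
    · -- z is in B, hence v precedes z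
      have hzf : z ∈ fB := List.mem_filter.mpr ⟨hzB, by simp [hpT, hzT]⟩
      have hhd : v :: fB.tail = fB := List.cons_head_tail hfBne
      have hztl : z ∈ fB.tail := by
        rcases List.mem_cons.mp (hhd ▸ hzf) with h | h
        · exact absurd h hzvne
        · exact h
      have hsub : Before l v z := by
        have h1 : [v, z].Sublist (v :: fB.tail) :=
          (List.cons_sublist_cons).mpr (List.singleton_sublist.mpr hztl)
        have h2 : fB.Sublist B := List.filter_sublist
        have h3 : B.Sublist l := by rw [hAB]; exact List.sublist_append_right _ _
        exact (h1.trans (hhd ▸ h2)).trans h3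
      have : gl.le v z := (hord hvT hzT (fun h => hzvne h.symm)).mpr hsub
      exact hzvne (gl.le_antisymm z hzT.1 v hvT.1 hzv this)
  have hseg : gl.IsSegEnds e u v := ⟨huT, hvT, hune, hulev, hcons⟩
  -- a₁ : either equal to u or properly inside
  have hcase_a : a₁ = u ∨ a₁ = v ∨ List.Sublist [u, a₁, v] l := by
    by_cases ha₁T : a₁ ∈ gl.Llt e
    · left
      have hfa : fA = l₁.filter pT ++ [a₁] := by
        rw [hfA, hA, List.filter_append]
        congr 1
        simp [hpT, ha₁T]
      have h1 : fA.getLast? = some a₁ := by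
        rw [hfa]
        exact List.getLast?_append_cons _ _ []
      have h2 : fA.getLast? = some u :=
        (List.getLast?_eq_getLast_of_ne_nil hfAne).trans (congrArg some hu.symm)
      rw [h1] at h2
      exact Option.some_injective _ h2
    · right; right
      have hua : u ≠ a₁ := fun h => ha₁T (h ▸ huT)
      have hul₁ : u ∈ l₁ := by
        rcases List.mem_append.mp (hA ▸ huA) with h | h
        · exact h
        · exact absurd (List.mem_singleton.mp h) hua
      have h1 : [u, a₁].Sublist A := by
        rw [hA]
        exact List.Sublist.append (List.singleton_sublist.mpr hul₁) (List.Sublist.refl _)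
      have h2 : ([u, a₁] ++ [v]).Sublist (A ++ B) :=
        List.Sublist.append h1 (List.singleton_sublist.mpr hvB)
      rw [hAB]
      exact h2
  have hcase_c : c₁ = u ∨ c₁ = v ∨ List.Sublist [u, c₁, v] l := by
    by_cases hc₁T : c₁ ∈ gl.Llt e
    · right; left
      have hfb : fB = c₁ :: l₂.filter pT := by
        rw [hfB, hB, List.filter_cons_of_pos (by simp [hpT, hc₁T])]
      have h1 : fB.head? = some c₁ := by rw [hfb]; rfl
      have h2 : fB.head? = some v :=
        (List.head?_eq_head hfBne).trans (congrArg some hv.symm)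
      rw [h1] at h2
      exact Option.some_injective _ h2
    · right; right
      have hvc : v ≠ c₁ := fun h => hc₁T (h ▸ hvT)
      have hvl₂ : v ∈ l₂ := by
        rcases List.mem_cons.mp (hB ▸ hvB) with h | h
        · exact absurd h hvc
        · exact h
      have h1 : [c₁, v].Sublist B := by
        rw [hB]
        exact (List.cons_sublist_cons).mpr (List.singleton_sublist.mpr hvl₂)
      have h2 : ([u] ++ [c₁, v]).Sublist (A ++ B) :=
        List.Sublist.append (List.singleton_sublist.mpr huA) h1
      rw [hAB]
      exact h2
  exact ⟨u, v, hseg, hws e u v hseg a₁ ha₁ hcase_a, hws e u v hseg c₁ hc₁ hcase_c⟩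

/-- Straddle lemma: an edge of `⋃𝒫` strictly straddling `w ∈ L` has depth at
most the depth of `w`. -/
lemma aux_straddle_depth (gl : GrainLine G x y) (hws : gl.WellStructured)
    (hsup : gl.supp ⊆ gl.L) {w : V} (hwL : w ∈ gl.L) {D : ℕ}
    (hD : ∀ n, w ∈ (gl.P n).support ↔ D ≤ n)
    {a c : V} {e : ℕ} (he : s(a, c) ∈ (gl.P e).edges)
    (haw : gl.le a w) (hane : a ≠ w) (hwc : gl.le w c) (hcne : c ≠ w) :
    e ≤ D := by
  by_contra hlt
  push_neg at hlt
  have he1 : 1 ≤ e := Nat.one_le_of_lt (Nat.lt_of_le_of_lt (Nat.zero_le D) hlt)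
  have hwT : w ∈ gl.Llt e := ⟨hwL, D, hlt, (hD D).2 le_rfl⟩
  have haL : a ∈ gl.L := hsup ⟨e, (gl.P e).fst_mem_support_of_mem_edges he⟩
  have hcL : c ∈ gl.L := hsup ⟨e, (gl.P e).snd_mem_support_of_mem_edges he⟩
  obtain ⟨l₁, l₂, hdec⟩ := aux_edge_mem_support_decomp he
  have key : ∃ u v, gl.IsSegEnds e u v ∧
      (gl.le u a ∧ gl.le a v) ∧ (gl.le u c ∧ gl.le c v) := by
    rcases hdec with hdec | hdec
    · exact aux_seg_interval gl hws he1 hdec haL hcL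
    · obtain ⟨u, v, hseg, h1, h2⟩ := aux_seg_interval gl hws he1 hdec hcL haL
      exact ⟨u, v, hseg, h2, h1⟩
  obtain ⟨u, v, hseg, ⟨hua, hav⟩, ⟨huc, hcv⟩⟩ := key
  obtain ⟨huT, hvT, hune, hulev, hcons⟩ := hseg
  have huw : gl.le u w := gl.le_trans u huT.1 a haL w hwL hua haw
  have hwv : gl.le w v := gl.le_trans w hwL c hcL v hvT.1 hwc hcv
  rcases hcons w hwT huw hwv with rfl | rfl
  · exact hane (gl.le_antisymm a haL w huT.1 haw hua)
  · exact hcne (gl.le_antisymm c hcL w hvT.1 hcv hwc)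

end AuxGrain

/-- a grain line in the graph defined by a free and
well-structured grain line has only finitely many vertices outside its limit
set; in particular some tail of it is free. -/
theorem grainline_in_free_is_almost_free {V : Type*} {G : SimpleGraph V}
    {x y x' y' : V} (gl : GrainLine G x y) (hfree : gl.Free)
    (hws : gl.WellStructured) (gl' : GrainLine gl.union x' y') :
    {v | v ∈ gl'.supp ∧ v ∉ gl'.L}.Finite ∧
    ∃ d : ℕ, InfEdgeConnOn (walkUnion (fun n => gl'.P (n + d)))
      (walkSupp (fun n => gl'.P (n + d))) := by
  classical
  have hsupL : gl.supp ⊆ gl.L := aux_supp_subset_L gl hfree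
  have hx'y' : x' ≠ y' := gl'.ne_xy
  -- every vertex on a Q-path lies in L
  have hQL : ∀ n : ℕ, ∀ z ∈ (gl'.P n).support, z ∈ gl.L := by
    intro n z hz
    obtain ⟨c, hc⟩ := aux_support_edge_of_ne (gl'.P n) hx'y' z hz
    have hadj : gl.union.Adj z c := (gl'.P n).adj_of_mem_edges hc
    obtain ⟨m, hm⟩ : ∃ m, s(z, c) ∈ (gl.P m).edges := hadj
    exact hsupL ⟨m, (gl.P m).fst_mem_support_of_mem_edges hm⟩
  have hx'L : x' ∈ gl.L := hQL 0 x' (gl'.P 0).start_mem_support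
  have hy'L : y' ∈ gl.L := hQL 0 y' (gl'.P 0).end_mem_support
  -- Q-edges live in some P-path
  have hQP : ∀ (n : ℕ) (α γ : V), s(α, γ) ∈ (gl'.P n).edges →
      ∃ p, s(α, γ) ∈ (gl.P p).edges := by
    intro n α γ he
    exact ((gl'.P n).adj_of_mem_edges he : gl.union.Adj α γ)
  -- straddling edges of a Q-path have bounded depth
  have hmem_Ed : ∀ (w : V), w ∈ gl.L → ∀ (D : ℕ),
      (∀ n, w ∈ (gl.P n).support ↔ D ≤ n) →
      ∀ (n : ℕ) (α γ : V), s(α, γ) ∈ (gl'.P n).edges →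
      gl.le α w → α ≠ w → gl.le w γ → γ ≠ w →
      ∃ p ≤ D, s(α, γ) ∈ (gl.P p).edges := by
    intro w hwL D hD n α γ he hαw hαne hwγ hγne
    obtain ⟨p, hp⟩ := hQP n α γ he
    exact ⟨p, aux_straddle_depth gl hws hsupL hwL hD hp hαw hαne hwγ hγne, hp⟩
  -- finiteness of bounded-depth edge sets
  have hEdfin : ∀ D : ℕ, {e : Sym2 V | ∃ p ≤ D, e ∈ (gl.P p).edges}.Finite := by
    intro D
    have hsub : {e : Sym2 V | ∃ p ≤ D, e ∈ (gl.P p).edges} ⊆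
        ⋃ p ∈ Set.Iic D, {e : Sym2 V | e ∈ (gl.P p).edges} := by
      rintro e ⟨p, hp, hpe⟩
      exact Set.mem_biUnion hp hpe
    exact ((Set.finite_Iic D).biUnion fun p _ => (gl.P p).edges.finite_toSet).subset hsub
  -- indices of Q-paths using a given finite edge set form a finite set
  have hSfin' : ∀ E : Set (Sym2 V), E.Finite →
      {m : ℕ | ∃ e ∈ E, e ∈ (gl'.P m).edges}.Finite := by
    intro E hE
    have hsub : {m : ℕ | ∃ e ∈ E, e ∈ (gl'.P m).edges} ⊆
        ⋃ e ∈ E, {m : ℕ | e ∈ (gl'.P m).edges} := by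
      rintro m ⟨e, he, hme⟩
      exact Set.mem_biUnion he hme
    refine ((hE.biUnion fun e _ => ?_).subset hsub)
    refine Set.Subsingleton.finite ?_
    intro m hm m' hm'
    by_contra hne
    exact gl'.edgeDisj m m' hne e hm hm'
  -- endpoints in order
  obtain ⟨a, b, haL, hbL, haM, hbM, hab, hax, hay, hxb, hyb, hor⟩ :
      ∃ a b : V, a ∈ gl.L ∧ b ∈ gl.L ∧ a ∈ gl'.L ∧ b ∈ gl'.L ∧ gl.le a b ∧
        gl.le a x' ∧ gl.le a y' ∧ gl.le x' b ∧ gl.le y' b ∧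
        ((a = x' ∧ b = y') ∨ (a = y' ∧ b = x')) := by
    rcases gl.le_total x' hx'L y' hy'L with h | h
    · exact ⟨x', y', hx'L, hy'L, gl'.x_mem, gl'.y_mem, h, gl.le_refl x' hx'L, h, h,
        gl.le_refl y' hy'L, Or.inl ⟨rfl, rfl⟩⟩
    · exact ⟨y', x', hy'L, hx'L, gl'.y_mem, gl'.x_mem, h, h, gl.le_refl y' hy'L,
        gl.le_refl x' hx'L, h, Or.inr ⟨rfl, rfl⟩⟩
  obtain ⟨Da, hDa⟩ := (gl.gl1 a).1 haL
  obtain ⟨Db, hDb⟩ := (gl.gl1 b).1 hbL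
  set EdAB : Set (Sym2 V) := {e | ∃ p ≤ Da, e ∈ (gl.P p).edges} ∪
    {e | ∃ p ≤ Db, e ∈ (gl.P p).edges} with hEdAB
  set S : Set ℕ := {m | ∃ e ∈ EdAB, e ∈ (gl'.P m).edges} with hS
  have hSfin : S.Finite := hSfin' EdAB ((hEdfin Da).union (hEdfin Db))
  -- the range bound for non-exceptional Q-paths
  have hrange : ∀ m ∉ S, ∀ z ∈ (gl'.P m).support, gl.le a z ∧ gl.le z b := by
    intro m hm z hz
    have hzL := hQL m z hz
    constructor
    · by_contra hbelow
      have hza : gl.le z a ∧ z ≠ a := by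
        rcases gl.le_total a haL z hzL with h | h
        · exact absurd h hbelow
        · exact ⟨h, fun hzz => hbelow (hzz ▸ gl.le_refl a haL)⟩
      obtain ⟨α, γ, heg, h1, h2, h3, h4⟩ := aux_excursion_edge
        (L := gl.L) (r := fun p q => gl.le q p)
        (fun p hp => gl.le_refl p hp)
        (fun p hp q hq h1 h2 => gl.le_antisymm p hp q hq h2 h1)
        (fun p hp q hq => (gl.le_total p hp q hq).symm)
        (gl'.isPath m) (hQL m) haL hax hay hz hza.1 (fun h => hza.2 h.symm)
      -- edge s(α,γ) with γ > a > α strictly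
      obtain ⟨p, hp, hpe⟩ := hmem_Ed a haL Da hDa m α γ heg h3 h4 h1 h2
      exact hm ⟨s(α, γ), Or.inl ⟨p, hp, hpe⟩, heg⟩
    · by_contra habove
      have hbz : gl.le b z ∧ b ≠ z := by
        rcases gl.le_total z hzL b hbL with h | h
        · exact absurd h habove
        · exact ⟨h, fun hzz => habove (hzz ▸ gl.le_refl b hbL)⟩
      obtain ⟨α, γ, heg, h1, h2, h3, h4⟩ := aux_excursion_edge
        (L := gl.L) (r := gl.le)
        (fun p hp => gl.le_refl p hp)
        (fun p hp q hq => gl.le_antisymm p hp q hq)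
        (fun p hp q hq => gl.le_total p hp q hq)
        (gl'.isPath m) (hQL m) hbL hxb hyb hz hbz.1 hbz.2
      -- edge s(α,γ) with γ < b < α strictly: use s(γ,α)
      have heg' : s(γ, α) ∈ (gl'.P m).edges := by rwa [Sym2.eq_swap]
      obtain ⟨p, hp, hpe⟩ := hmem_Ed b hbL Db hDb m γ α heg' h1 h2 h3 h4
      refine hm ⟨s(γ, α), Or.inr ⟨p, hp, hpe⟩, heg'⟩
  -- every path carrying a private vertex is exceptional
  have hprivS : ∀ n : ℕ, ∀ w ∈ (gl'.P n).support, w ∉ gl'.L → n ∈ S := by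
    intro n w hw hwM
    by_contra hnS
    obtain ⟨hwa, hwb⟩ := hrange n hnS w hw
    have hwL := hQL n w hw
    have hwnea : w ≠ a := fun h => hwM (h ▸ haM)
    have hwneb : w ≠ b := fun h => hwM (h ▸ hbM)
    obtain ⟨Dw, hDw⟩ := (gl.gl1 w).1 hwL
    set Sw : Set ℕ := {m | ∃ e ∈ {e : Sym2 V | ∃ p ≤ Dw, e ∈ (gl.P p).edges},
      e ∈ (gl'.P m).edges} with hSw
    have hSwfin : Sw.Finite := hSfin' _ (hEdfin Dw)
    have hsub : {m : ℕ | m ∉ S ∧ m ≠ n} ⊆ Sw := by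
      rintro m ⟨hmS, hmn⟩
      have hwQm : w ∉ (gl'.P m).support := gl'.gl2 n w hw hwM m hmn
      have htot : ∀ z ∈ (gl'.P m).support,
          (gl.le z w ∧ z ≠ w) ∨ (gl.le w z ∧ w ≠ z) := by
        intro z hz
        have hzL := hQL m z hz
        have hzw : z ≠ w := fun h => hwQm (h ▸ hz)
        rcases gl.le_total z hzL w hwL with h | h
        · exact Or.inl ⟨h, hzw⟩
        · exact Or.inr ⟨h, fun hh => hzw hh.symm⟩
      -- w is strictly between x' and y' in one of the two orientations
      have hcross : ∃ α γ, s(α, γ) ∈ (gl'.P m).edges ∧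
          (gl.le α w ∧ α ≠ w) ∧ (gl.le w γ ∧ w ≠ γ) := by
        rcases hor with ⟨hax', hby'⟩ | ⟨hay', hbx'⟩
        · -- a = x', b = y' : walk starts below w, ends above w
          obtain ⟨α, γ, he, h1, h2⟩ := aux_walk_cross
            (below := fun z => gl.le z w ∧ z ≠ w) (above := fun z => gl.le w z ∧ w ≠ z)
            (gl'.P m) htot
            (⟨hax' ▸ hwa, fun h => hwnea (hax' ▸ h.symm)⟩)
            (by
              rintro ⟨h1, h2⟩
              exact h2 (gl.le_antisymm y' hy'L w hwL h1 (hby' ▸ hwb) ▸ rfl))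
          exact ⟨α, γ, he, h1, h2⟩
        · -- a = y', b = x' : walk starts above w, ends below w
          obtain ⟨α, γ, he, h1, h2⟩ := aux_walk_cross
            (below := fun z => gl.le w z ∧ w ≠ z) (above := fun z => gl.le z w ∧ z ≠ w)
            (gl'.P m) (fun z hz => (htot z hz).symm)
            (⟨hbx' ▸ hwb, fun h => hwneb (hbx' ▸ h)⟩)
            (by
              rintro ⟨h1, h2⟩
              exact h2 ((gl.le_antisymm w hwL y' hy'L h1 (hay' ▸ hwa)).symm ▸ rfl))
          exact ⟨γ, α, by rwa [Sym2.eq_swap], h2, h1⟩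
      obtain ⟨α, γ, he, ⟨h1, h2⟩, ⟨h3, h4⟩⟩ := hcross
      obtain ⟨p, hp, hpe⟩ := hmem_Ed w hwL Dw hDw m α γ he h1 h2 h3
        (fun h => h4 h.symm)
      exact ⟨s(α, γ), ⟨p, hp, hpe⟩, he⟩
    have hinf : {m : ℕ | m ∉ S ∧ m ≠ n}.Infinite := by
      have h1 : (S ∪ {n})ᶜ.Infinite := (hSfin.union (Set.finite_singleton n)).infinite_compl
      have h2 : (S ∪ {n})ᶜ = {m : ℕ | m ∉ S ∧ m ≠ n} := by
        ext m
        simp only [Set.mem_compl_iff, Set.mem_union, Set.mem_singleton_iff, not_or,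
          Set.mem_setOf_eq]
      rwa [h2] at h1
    exact hinf (hSwfin.subset hsub)
  -- Part 1
  have hPrivFin : {v | v ∈ gl'.supp ∧ v ∉ gl'.L}.Finite := by
    have hsub : {v | v ∈ gl'.supp ∧ v ∉ gl'.L} ⊆
        ⋃ n ∈ S, {v : V | v ∈ (gl'.P n).support} := by
      rintro v ⟨⟨n, hn⟩, hvM⟩
      exact Set.mem_biUnion (hprivS n v hn hvM) hn
    exact (hSfin.biUnion fun n _ => (gl'.P n).support.finite_toSet).subset hsub
  -- Part 2
  obtain ⟨c₀, hc₀⟩ := hSfin.bddAbove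
  set d := c₀ + 1 with hd
  have htail : ∀ n : ℕ, d ≤ n → ∀ z ∈ (gl'.P n).support, z ∈ gl'.L := by
    intro n hdn z hz
    by_contra hzM
    have := hc₀ (hprivS n z hz hzM)
    omega
  refine ⟨hPrivFin, d, ⟨x', ⟨0, (gl'.P (0 + d)).start_mem_support⟩,
    y', ⟨0, (gl'.P (0 + d)).end_mem_support⟩, hx'y'⟩, ?_⟩
  intro u hu v hv huv
  obtain ⟨nu, hnu⟩ := hu
  obtain ⟨nv, hnv⟩ := hv
  have huM : u ∈ gl'.L := htail (nu + d) (by omega) u hnu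
  have hvM : v ∈ gl'.L := htail (nv + d) (by omega) v hnv
  obtain ⟨Nu, hNu⟩ := (gl'.gl1 u).1 huM
  obtain ⟨Nv, hNv⟩ := (gl'.gl1 v).1 hvM
  set H := walkUnion (fun n => gl'.P (n + d)) with hH
  have hHedge : ∀ (q : V × V) (n : ℕ), s(q.1, q.2) ∈ (gl'.P (n + d)).edges →
      s(q.1, q.2) ∈ H.edgeSet := by
    rintro ⟨p₁, p₂⟩ n he
    exact (⟨n, he⟩ : ∃ n, s(p₁, p₂) ∈ (gl'.P (n + d)).edges)
  have build : ∀ k : ℕ, ∃ R : H.Walk u v, R.IsPath ∧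
      ∀ e ∈ R.edges, e ∈ (gl'.P ((Nu + Nv + k) + d)).edges := by
    intro k
    set m := (Nu + Nv + k) + d with hm
    have hum : u ∈ (gl'.P m).support := (hNu m).2 (by omega)
    have hvm : v ∈ (gl'.P m).support := (hNv m).2 (by omega)
    obtain ⟨q, hq, hqe⟩ := aux_exists_subpath_between (gl'.isPath m) hum hvm
    have hqH : ∀ e ∈ q.edges, e ∈ H.edgeSet := by
      intro e he
      induction e with
      | h p₁ p₂ => exact hHedge (p₁, p₂) (Nu + Nv + k) (hqe _ he)
    exact ⟨q.transfer H hqH, hq.transfer hqH,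
      by rw [SimpleGraph.Walk.edges_transfer]; exact hqe⟩
  choose R hRpath hRe using build
  refine ⟨R, hRpath, ?_⟩
  intro m n hmn e hem hen
  exact gl'.edgeDisj ((Nu + Nv + m) + d) ((Nu + Nv + n) + d) (by omega) e
    (hRe m e hem) (hRe n e hen)
end

section
/- Let G be an infinitely edge-connected graph and {A,B} a compound-separation of G that minimally separates two vertices of G. Then the induced subgraphs G[A] and G[B] are infinitely edge-connected. -/
open SimpleGraph

section Aux

variable {V : Type*} {G : SimpleGraph V}

lemma finEdgeConn_of_infEdgeConn (hG : InfEdgeConn G) (u v : V)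
    (F : Set (Sym2 V)) (hF : F.Finite) : (G.deleteEdges F).Reachable u v := by
  by_cases huv : u = v
  · subst huv; rfl
  obtain ⟨P, hpath, hdisj⟩ := hG.2 u v huv
  by_contra hreach
  have key : ∀ n : ℕ, ∃ e ∈ F, e ∈ (P n).edges := by
    intro n
    by_contra h
    push_neg at h
    exact hreach ⟨(P n).toDeleteEdges F (fun e he hFe => h e hFe he)⟩
  choose f hfF hfe using key
  have hinj : Function.Injective f := by
    intro m n hmn
    by_contra hne
    exact hdisj m n hne (f m) (hfe m) (hmn ▸ hfe n)
  exact (Set.infinite_of_injective_forall_mem hinj hfF) hF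

lemma greedy {u v : V}
    (h : ∀ F : Set (Sym2 V), F.Finite → (G.deleteEdges F).Reachable u v) :
    ∃ P : ℕ → G.Walk u v,
      (∀ n, (P n).IsPath) ∧ ∀ m n, m ≠ n → EdgeDisjW (P m) (P n) := by
  classical
  have pick : ∀ F : Set (Sym2 V), F.Finite →
      ∃ p : G.Walk u v, p.IsPath ∧ ∀ e ∈ p.edges, e ∉ F := by
    intro F hF
    obtain ⟨w⟩ := h F hF
    have hsub := (w.toPath : (G.deleteEdges F).Walk u v).edges_subset_edgeSet
    have hE : ∀ e ∈ (w.toPath : (G.deleteEdges F).Walk u v).edges, e ∈ G.edgeSet := by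
      intro e he
      have := hsub he
      rw [edgeSet_deleteEdges] at this
      exact this.1
    refine ⟨(w.toPath : (G.deleteEdges F).Walk u v).transfer G hE,
      Walk.IsPath.transfer hE w.toPath.2, ?_⟩
    intro e he
    rw [Walk.edges_transfer] at he
    have := hsub he
    rw [edgeSet_deleteEdges] at this
    exact this.2
  choose pickP hp1 hp2 using pick
  set Fset : List (G.Walk u v) → Set (Sym2 V) :=
    fun l => {e | ∃ p ∈ l, e ∈ p.edges} with hFset
  have hFfin : ∀ l, (Fset l).Finite := by
    intro l
    have : Fset l = ⋃ p ∈ {p | p ∈ l}, {e | e ∈ p.edges} := by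
      ext e; simp [hFset]
    rw [this]
    exact Set.Finite.biUnion l.finite_toSet (fun p _ => p.edges.finite_toSet)
  let L : ℕ → List (G.Walk u v) :=
    fun n => Nat.rec [] (fun _ l => l ++ [pickP (Fset l) (hFfin l)]) n
  set P : ℕ → G.Walk u v := fun n => pickP (Fset (L n)) (hFfin (L n)) with hP
  have hLsucc : ∀ n, L (n + 1) = L n ++ [P n] := fun n => rfl
  have hmem : ∀ m n, m < n → P m ∈ L n := by
    intro m n
    induction n with
    | zero => omega
    | succ k ih =>
      intro hmk
      rw [hLsucc]
      rcases Nat.lt_succ_iff_lt_or_eq.mp hmk with h | h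
      · exact List.mem_append_left _ (ih h)
      · subst h; exact List.mem_append_right _ (List.mem_singleton_self _)
  have hdisj : ∀ m n, m < n → EdgeDisjW (P n) (P m) := by
    intro m n hmn e he
    have := hp2 (Fset (L n)) (hFfin (L n)) e he
    intro hem
    exact this ⟨P m, hmem m n hmn, hem⟩
  refine ⟨P, fun n => hp1 _ _, ?_⟩
  intro m n hmn
  rcases hmn.lt_or_gt with h | h
  · intro e hem hen
    exact hdisj m n h e hen hem
  · exact hdisj n m h

lemma finite_sym2_pairs {F' : Set (Sym2 V)} (h : F'.Finite) :
    {p : V × V | s(p.1, p.2) ∈ F'}.Finite := by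
  have hsub : {p : V × V | s(p.1, p.2) ∈ F'} ⊆
      ⋃ e ∈ F', {p : V × V | s(p.1, p.2) = e} := by
    intro p hp
    exact Set.mem_biUnion hp rfl
  refine Set.Finite.subset (Set.Finite.biUnion h (fun e _ => ?_)) hsub
  induction e with
  | _ a b =>
    refine Set.Finite.subset ((Set.finite_singleton (b,a)).insert (a,b)) ?_
    rintro ⟨p1, p2⟩ hp
    simp only [Set.mem_setOf_eq, Sym2.eq, Sym2.rel_iff', Prod.mk.injEq] at hp
    rcases hp with ⟨h1, h2⟩ | h
    · exact Set.mem_insert_iff.mpr (Or.inl (by simp [h1, h2]))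
    · rcases Prod.mk.injEq .. ▸ h with ⟨h1, h2⟩
      exact Set.mem_insert_iff.mpr (Or.inr (by simp_all))

lemma isCompoundSep_symm {A B : Set V} (h : IsCompoundSep G A B) :
    IsCompoundSep G B A := by
  obtain ⟨h1, h2, h3, h4, h5⟩ := h
  refine ⟨by rw [Set.union_comm]; exact h1, h3, h2, by rwa [Set.inter_comm], ?_⟩
  have : {p : V × V | G.Adj p.1 p.2 ∧ p.1 ∈ B \ A ∧ p.2 ∈ A \ B} =
      Prod.swap ⁻¹' {p : V × V | G.Adj p.1 p.2 ∧ p.1 ∈ A \ B ∧ p.2 ∈ B \ A} := by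
    ext ⟨p1, p2⟩
    simp only [Set.mem_setOf_eq, Set.mem_preimage, Prod.swap_prod_mk]
    exact ⟨fun ⟨ha, hb, hc⟩ => ⟨ha.symm, hc, hb⟩, fun ⟨ha, hb, hc⟩ => ⟨ha.symm, hc, hb⟩⟩
  rw [this]
  exact Set.Finite.preimage Prod.swap_injective.injOn h5

/-- The key lemma: under the hypotheses of the splitting lemma, with `ua` the
vertex of the pair lying in `A \ B` and `vb` the other one, `G[A]` is
infinitely edge-connected. -/
lemma keyside (hG : InfEdgeConn G) (A B : Set V)
    (hAB : IsCompoundSep G A B) (u v : V) (hmin : MinSeps G A B u v)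
    (ua vb : V) (huaA : ua ∈ A) (huaB : ua ∉ B) (hvbB : vb ∈ B) (hvbA : vb ∉ A)
    (hpair : ∀ C D : Set V, ua ∈ C \ D → vb ∈ D \ C → SepPair C D u v) :
    InfEdgeConn (G.induce A) := by
  classical
  set X : Set (V × V) := {p : V × V | G.Adj p.1 p.2 ∧ p.1 ∈ A \ B ∧ p.2 ∈ B \ A} with hX
  have hXfin : X.Finite := hAB.2.2.2.2
  set Xsym : Set (Sym2 V) := (fun p : V × V => s(p.1, p.2)) '' X with hXsym
  have hXsymfin : Xsym.Finite := hXfin.image _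
  have huniv : A ∪ B = Set.univ := hAB.1
  have hmemAB : ∀ x : V, x ∈ A ∨ x ∈ B := by
    intro x
    have : x ∈ A ∪ B := huniv ▸ Set.mem_univ x
    exact this
  -- there is a second vertex in A
  have hx2 : ∃ x ∈ A, x ≠ ua := by
    by_contra h
    push_neg at h
    obtain ⟨W⟩ := finEdgeConn_of_infEdgeConn hG ua vb Xsym hXsymfin
    obtain ⟨d, hd, hd1, hd2⟩ := W.exists_boundary_dart A huaA hvbA
    have hadj := d.adj
    rw [deleteEdges_adj] at hadj
    have hd2B : d.toProd.2 ∈ B \ A := ⟨(hmemAB _).resolve_left hd2, hd2⟩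
    have hd1AB : d.toProd.1 ∈ A \ B := ⟨hd1, (h _ hd1) ▸ huaB⟩
    exact hadj.2 ⟨(d.toProd.1, d.toProd.2), ⟨hadj.1, hd1AB, hd2B⟩, rfl⟩
  -- the main reachability claim
  have Reach : ∀ F : Set (Sym2 ↥A), F.Finite →
      ∀ x : ↥A, ((G.induce A).deleteEdges F).Reachable ⟨ua, huaA⟩ x := by
    intro F hF
    set GA := (G.induce A).deleteEdges F with hGA
    set K : Set V := {z : V | ∃ h : z ∈ A, GA.Reachable ⟨ua, huaA⟩ ⟨z, h⟩} with hK
    have hKA : K ⊆ A := fun z hz => hz.1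
    have huaK : ua ∈ K := ⟨huaA, Reachable.refl _⟩
    set Fsym : Set (Sym2 V) := Sym2.map (Subtype.val) '' F with hFsym
    have hFsymfin : Fsym.Finite := hF.image _
    -- adjacency step inside A
    have hstep : ∀ (p q : V) (hp : p ∈ A) (hq : q ∈ A), G.Adj p q →
        s(p, q) ∉ Fsym → GA.Adj ⟨p, hp⟩ ⟨q, hq⟩ := by
      intro p q hp hq hadj hnf
      rw [hGA, deleteEdges_adj]
      refine ⟨hadj, fun hmem => hnf ?_⟩
      exact ⟨s((⟨p, hp⟩ : ↥A), (⟨q, hq⟩ : ↥A)), hmem, by simp [Sym2.map_pair_eq]⟩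
    -- Step A: every vertex of A ∩ B is in K
    have stepA : ∀ w ∈ A ∩ B, w ∈ K := by
      intro w hw
      by_contra hwK
      set C : Set V := K with hC
      set D : Set V := B ∪ (A \ K) with hD
      have hCD : IsCompoundSep G C D := by
        refine ⟨?_, ⟨ua, ?_⟩, ⟨vb, ?_⟩, ?_, ?_⟩
        · apply Set.eq_univ_of_forall
          intro x
          rcases hmemAB x with hxA | hxB
          · by_cases hxK : x ∈ K
            · exact Set.mem_union_left _ hxK
            · exact Set.mem_union_right _ (Or.inr ⟨hxA, hxK⟩)
          · exact Set.mem_union_right _ (Or.inl hxB)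
        · exact ⟨huaK, fun hmem => hmem.elim huaB (fun h => h.2 huaK)⟩
        · exact ⟨Or.inl hvbB, fun hmem => hvbA (hKA hmem)⟩
        · refine Set.Finite.subset hAB.2.2.2.1 ?_
          rintro z ⟨hzK, hzD⟩
          rcases hzD with hzB | hzA
          · exact ⟨hKA hzK, hzB⟩
          · exact absurd hzK hzA.2
        · refine Set.Finite.subset (hXfin.union (finite_sym2_pairs hFsymfin)) ?_
          rintro ⟨p1, p2⟩ ⟨hadj, hp1, hp2⟩
          have hp1K : p1 ∈ K := hp1.1
          have hp1B : p1 ∉ B := fun h => hp1.2 (Or.inl h)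
          by_cases hp2A : p2 ∈ A
          · -- p2 ∈ A \ K, so the edge must be in F
            right
            by_contra hnf
            have : GA.Adj ⟨p1, hKA hp1K⟩ ⟨p2, hp2A⟩ := hstep _ _ _ _ hadj hnf
            exact hp2.2 ⟨hp2A, hp1K.2.trans this.reachable⟩
          · left
            have hp2B : p2 ∈ B := (hmemAB p2).resolve_left hp2A
            exact ⟨hadj, ⟨hKA hp1K, hp1B⟩, hp2B, hp2A⟩
      have hss : C ∩ D ⊂ A ∩ B := by
        constructor
        · rintro z ⟨hzK, hzD⟩
          rcases hzD with hzB | hzA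
          · exact ⟨hKA hzK, hzB⟩
          · exact absurd hzK hzA.2
        · intro hsub
          exact hwK (hsub hw).1
      refine hmin.2 C D hCD hss (hpair C D ?_ ?_)
      · exact ⟨huaK, fun hmem => hmem.elim huaB (fun h => h.2 huaK)⟩
      · exact ⟨Or.inl hvbB, fun hmem => hvbA (hKA hmem)⟩
    -- Step B: every vertex of A is in K
    have stepB : ∀ x (hx : x ∈ A), x ∈ K := by
      intro x hx
      by_contra hxK
      set K' : Set V := {z : V | ∃ h : z ∈ A, GA.Reachable ⟨x, hx⟩ ⟨z, h⟩} with hK'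
      have hK'A : K' ⊆ A := fun z hz => hz.1
      have hdisjKK' : ∀ z, z ∈ K' → z ∉ K := by
        rintro z ⟨hzA, hzr⟩ ⟨hzA', hzr'⟩
        apply hxK
        exact ⟨hx, hzr'.trans (by
          have : (⟨z, hzA'⟩ : ↥A) = ⟨z, hzA⟩ := rfl
          rw [this]
          exact hzr.symm)⟩
      set Del : Set (Sym2 V) := Xsym ∪ Fsym with hDel
      obtain ⟨W⟩ := finEdgeConn_of_infEdgeConn hG x ua Del (hXsymfin.union hFsymfin)
      have huaK' : ua ∉ K' := fun h => hdisjKK' ua h huaK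
      obtain ⟨d, hd, hd1, hd2⟩ := W.exists_boundary_dart K' ⟨hx, Reachable.refl _⟩ huaK'
      have hadj := d.adj
      rw [deleteEdges_adj] at hadj
      have hDelmem : s(d.toProd.1, d.toProd.2) ∉ Del := hadj.2
      have hDelX : s(d.toProd.1, d.toProd.2) ∉ Xsym := fun h => hDelmem (Or.inl h)
      have hDelF : s(d.toProd.1, d.toProd.2) ∉ Fsym := fun h => hDelmem (Or.inr h)
      by_cases hp2A : d.toProd.2 ∈ A
      · have hadjA : GA.Adj ⟨d.toProd.1, hK'A hd1⟩ ⟨d.toProd.2, hp2A⟩ :=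
          hstep _ _ _ _ hadj.1 hDelF
        exact hd2 ⟨hp2A, hd1.2.trans hadjA.reachable⟩
      · have hp2B : d.toProd.2 ∈ B \ A := ⟨(hmemAB _).resolve_left hp2A, hp2A⟩
        have hp1B : d.toProd.1 ∉ B := by
          intro hB
          exact hdisjKK' _ hd1 (stepA _ ⟨hK'A hd1, hB⟩)
        exact hDelX ⟨(d.toProd.1, d.toProd.2), ⟨hadj.1, ⟨hK'A hd1, hp1B⟩, hp2B⟩, rfl⟩
    rintro ⟨xv, hxv⟩
    obtain ⟨h', hr⟩ := stepB xv hxv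
    exact hr
  -- assemble
  obtain ⟨x, hxA, hxua⟩ := hx2
  refine ⟨⟨⟨x, hxA⟩, ⟨ua, huaA⟩, fun h => hxua (congrArg Subtype.val h)⟩, ?_⟩
  intro a b hab
  apply greedy
  intro F hF
  exact ((Reach F hF a).symm).trans (Reach F hF b)

end Aux

/-- splitting lemma: if a compound-separation `{A,B}` of an
infinitely edge-connected graph minimally separates two vertices, then both
`G[A]` and `G[B]` are infinitely edge-connected. -/
theorem splitting_lemma {V : Type*} (G : SimpleGraph V) (hG : InfEdgeConn G)
    (A B : Set V) (hAB : IsCompoundSep G A B)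
    (u v : V) (hmin : MinSeps G A B u v) :
    InfEdgeConn (G.induce A) ∧ InfEdgeConn (G.induce B) := by
  have hBA : IsCompoundSep G B A := isCompoundSep_symm hAB
  have hminBA : MinSeps G B A u v := by
    refine ⟨hmin.1.symm, fun C D hCD hss => hmin.2 C D hCD ?_⟩
    · rwa [Set.inter_comm A B]
  rcases hmin.1 with ⟨hu, hv⟩ | ⟨hu, hv⟩
  · constructor
    · exact keyside hG A B hAB u v hmin u v hu.1 hu.2 hv.1 hv.2
        (fun C D h1 h2 => Or.inl ⟨h1, h2⟩)
    · exact keyside hG B A hBA u v hminBA v u hv.1 hv.2 hu.1 hu.2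
        (fun C D h1 h2 => Or.inr ⟨h2, h1⟩)
  · constructor
    · exact keyside hG A B hAB u v hmin v u hv.1 hv.2 hu.1 hu.2
        (fun C D h1 h2 => Or.inr ⟨h2, h1⟩)
    · exact keyside hG B A hBA u v hminBA u v hu.1 hu.2 hv.1 hv.2
        (fun C D h1 h2 => Or.inl ⟨h1, h2⟩)
end
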